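/- arXiv:math/9906141 — 9 statements merged into one kernel-verified Lean document; each statement's English description precedes it below -/
import Mathlib

section
/- Let R be an exchange ring and let e_1, …, e_n ∈ R be idempotents. Then there exists an idempotent e ∈ e_1R + ⋯ + e_nR such that e_1R ⊆ eR and, for every i, the right R-module e_iR is isomorphic to a direct summand of eR. In particular, ReR = Re_1R + ⋯ + Re_nR. -/
universe u

/-- A unital ring `R` is an *exchange ring* if for every `a ∈ R` there exists an
idempotent `e ∈ aR` such that `1 - e ∈ (1 - a)R`. -/
def IsExchangeRing (R : Type*) [Ring R] : Prop :=
  ∀ a : R, ∃ e r s : R, IsIdempotentElem e ∧ e = a * r ∧ 1 - e = (1 - a) * s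

section Aux

variable {R : Type u} [Ring R]

/-- Left multiplication as an `Rᵐᵒᵖ`-linear endomap of `R`. -/
private def lmul (a : R) : R →ₗ[Rᵐᵒᵖ] R where
  toFun x := a * x
  map_add' x y := mul_add a x y
  map_smul' r x := by
    simp only [MulOpposite.smul_eq_mul_unop, RingHom.id_apply, mul_assoc]

private lemma lmul_apply (a x : R) : lmul a x = a * x := rfl

/-- The key two-idempotent step: given idempotents `E, f` in an exchange ring there is an
idempotent `g = E*x + f*y` with `g*E = E` and a split embedding of `fR` into `gR`,
witnessed by `A ∈ gR`, `B ∈ fR` with `B*A = f`. -/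
private lemma exchange_pair (hR : IsExchangeRing R) (E f : R)
    (hE : E * E = E) (hf : f * f = f) :
    ∃ g A B x y : R, g * g = g ∧ g = E * x + f * y ∧ g * E = E ∧
      g * A = A ∧ f * B = B ∧ B * A = f := by
  obtain ⟨P, t, t', hPi, hPt, hPt'⟩ := hR (1 - f * E * f)
  have h1P : 1 - P = f * E * f * t' := by rw [hPt', sub_sub_cancel]
  obtain ⟨u, hu⟩ : ∃ u : R, u = 1 - E := ⟨_, rfl⟩
  obtain ⟨s₁, hs₁⟩ : ∃ s₁ : R, s₁ = t' * f := ⟨_, rfl⟩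
  obtain ⟨s₂, hs₂⟩ : ∃ s₂ : R, s₂ = t * f := ⟨_, rfl⟩
  obtain ⟨p, hp⟩ : ∃ p : R, p = f * E * f * s₁ := ⟨_, rfl⟩
  obtain ⟨p', hp'⟩ : ∃ p' : R, p' = f * u * f * s₂ := ⟨_, rfl⟩
  have hEu : E * u = 0 := by rw [hu, mul_sub, mul_one, hE, sub_self]
  have huE : u * E = 0 := by rw [hu, sub_mul, one_mul, hE, sub_self]
  have huu : u * u = u := by
    rw [hu]
    calc (1 - E) * (1 - E) = 1 - E - E + E * E := by noncomm_ring
    _ = 1 - E := by rw [hE]; noncomm_ring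
  have hp1P : (1 - P) * f = p := by rw [h1P, hp, hs₁]; noncomm_ring
  have hf1P : f * (1 - P) = 1 - P := by
    calc f * (1 - P) = f * f * E * f * t' := by rw [h1P]; noncomm_ring
    _ = f * E * f * t' := by rw [hf]
    _ = 1 - P := h1P.symm
  have hfp : f * p = p := by rw [← hp1P, ← mul_assoc, hf1P]
  have hpf : p * f = p := by
    calc p * f = f * E * f * t' * (f * f) := by rw [hp, hs₁]; noncomm_ring
    _ = f * E * f * t' * f := by rw [hf]
    _ = p := by rw [hp, hs₁]; noncomm_ring
  have h1P1P : (1 - P) * (1 - P) = 1 - P := by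
    calc (1 - P) * (1 - P) = 1 - P - P + P * P := by noncomm_ring
    _ = 1 - P := by rw [hPi.eq]; noncomm_ring
  have hp1Pr : p * (1 - P) = 1 - P := by
    rw [← hp1P, mul_assoc, hf1P, h1P1P]
  have hpp : p * p = p := by
    nth_rewrite 2 [← hp1P]
    rw [← mul_assoc, hp1Pr, hp1P]
  have hPf : P * f = f - p := by rw [← hp1P]; noncomm_ring
  have hfPf : f * (P * f) = f - p := by rw [hPf, mul_sub, hf, hfp]
  have hfPf2 : f * (P * f) = f * t * f - f * E * f * t * f := by
    calc f * (P * f) = f * t * f - f * f * E * f * t * f := by rw [hPt]; noncomm_ring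
    _ = f * t * f - f * E * f * t * f := by rw [hf]
  have hp'fp : p' = f - p := by
    calc p' = f * f * t * f - f * E * f * t * f := by rw [hp', hu, hs₂]; noncomm_ring
    _ = f * t * f - f * E * f * t * f := by rw [hf]
    _ = f * (P * f) := hfPf2.symm
    _ = f - p := hfPf
  have hfp' : f * p' = p' := by rw [hp'fp, mul_sub, hf, hfp]
  have hp'f : p' * f = p' := by rw [hp'fp, sub_mul, hf, hpf]
  have hp'p' : p' * p' = p' := by
    rw [hp'fp]
    calc (f - p) * (f - p) = f * f - f * p - p * f + p * p := by noncomm_ring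
    _ = f - p := by rw [hf, hfp, hpf, hpp]; noncomm_ring
  -- the four witnesses
  obtain ⟨a₁, ha₁⟩ : ∃ a₁ : R, a₁ = E * f * s₁ * p := ⟨_, rfl⟩
  obtain ⟨b₁, hb₁⟩ : ∃ b₁ : R, b₁ = p * f * E := ⟨_, rfl⟩
  obtain ⟨a₂, ha₂⟩ : ∃ a₂ : R, a₂ = u * f * s₂ * p' := ⟨_, rfl⟩
  obtain ⟨b₂, hb₂⟩ : ∃ b₂ : R, b₂ = p' * f * u := ⟨_, rfl⟩
  obtain ⟨q, hq⟩ : ∃ q : R, q = a₂ * b₂ := ⟨_, rfl⟩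
  have F1 : b₁ * a₁ = p := by
    calc b₁ * a₁ = p * f * (E * E) * f * s₁ * p := by rw [hb₁, ha₁]; noncomm_ring
    _ = p * f * E * f * s₁ * p := by rw [hE]
    _ = p * (f * E * f * s₁) * p := by noncomm_ring
    _ = p * p * p := by rw [← hp]
    _ = p := by rw [hpp, hpp]
  have F2 : b₂ * a₂ = p' := by
    calc b₂ * a₂ = p' * f * (u * u) * f * s₂ * p' := by rw [hb₂, ha₂]; noncomm_ring
    _ = p' * f * u * f * s₂ * p' := by rw [huu]
    _ = p' * (f * u * f * s₂) * p' := by noncomm_ring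
    _ = p' * p' * p' := by rw [← hp']
    _ = p' := by rw [hp'p', hp'p']
  have F3 : b₁ * a₂ = 0 := by
    calc b₁ * a₂ = p * f * (E * u) * (f * s₂ * p') := by rw [hb₁, ha₂]; noncomm_ring
    _ = 0 := by rw [hEu, mul_zero, zero_mul]
  have F4 : b₂ * a₁ = 0 := by
    calc b₂ * a₁ = p' * f * (u * E) * (f * s₁ * p) := by rw [hb₂, ha₁]; noncomm_ring
    _ = 0 := by rw [huE, mul_zero, zero_mul]
  have ha₂p' : a₂ * p' = a₂ := by
    calc a₂ * p' = u * f * s₂ * (p' * p') := by rw [ha₂]; noncomm_ring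
    _ = a₂ := by rw [hp'p', ha₂]
  have F5 : q * a₂ = a₂ := by
    calc q * a₂ = a₂ * (b₂ * a₂) := by rw [hq]; noncomm_ring
    _ = a₂ * p' := by rw [F2]
    _ = a₂ := ha₂p'
  have F6 : q * a₁ = 0 := by
    calc q * a₁ = a₂ * (b₂ * a₁) := by rw [hq]; noncomm_ring
    _ = 0 := by rw [F4, mul_zero]
  have F7 : E * a₁ = a₁ := by
    calc E * a₁ = (E * E) * (f * s₁ * p) := by rw [ha₁]; noncomm_ring
    _ = a₁ := by rw [hE, ha₁]; noncomm_ring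
  have F8 : E * a₂ = 0 := by
    calc E * a₂ = (E * u) * (f * s₂ * p') := by rw [ha₂]; noncomm_ring
    _ = 0 := by rw [hEu, zero_mul]
  have F9 : E * q = 0 := by
    rw [hq, ← mul_assoc, F8, zero_mul]
  have hb₂E : b₂ * E = 0 := by
    calc b₂ * E = (p' * f) * (u * E) := by rw [hb₂]; noncomm_ring
    _ = 0 := by rw [huE, mul_zero]
  have F10 : q * E = 0 := by
    rw [hq, mul_assoc, hb₂E, mul_zero]
  have F11 : f * b₁ = b₁ := by
    calc f * b₁ = (f * p) * (f * E) := by rw [hb₁]; noncomm_ring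
    _ = b₁ := by rw [hfp, hb₁]; noncomm_ring
  have F12 : f * b₂ = b₂ := by
    calc f * b₂ = (f * p') * (f * u) := by rw [hb₂]; noncomm_ring
    _ = b₂ := by rw [hfp', hb₂]; noncomm_ring
  have F13 : q * q = q := by
    calc q * q = a₂ * (b₂ * a₂) * b₂ := by rw [hq]; noncomm_ring
    _ = a₂ * p' * b₂ := by rw [F2]
    _ = a₂ * b₂ := by rw [ha₂p']
    _ = q := hq.symm
  refine ⟨E + q, a₁ + a₂, b₁ + b₂, 1 - f * (s₂ * (p' * b₂)), s₂ * (p' * b₂), ?_, ?_, ?_, ?_, ?_, ?_⟩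
  · calc (E + q) * (E + q) = E * E + E * q + q * E + q * q := by noncomm_ring
    _ = E + q := by rw [hE, F9, F10, F13]; abel
  · rw [hq, ha₂, hu]; noncomm_ring
  · calc (E + q) * E = E * E + q * E := by noncomm_ring
    _ = E := by rw [hE, F10]; abel
  · calc (E + q) * (a₁ + a₂) = E * a₁ + E * a₂ + q * a₁ + q * a₂ := by noncomm_ring
    _ = a₁ + a₂ := by rw [F7, F8, F6, F5]; abel
  · rw [mul_add, F11, F12]
  · calc (b₁ + b₂) * (a₁ + a₂) = b₁ * a₁ + b₁ * a₂ + b₂ * a₁ + b₂ * a₂ := by noncomm_ring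
    _ = p + 0 + 0 + p' := by rw [F1, F3, F4, F2]
    _ = f := by rw [hp'fp]; noncomm_ring

/-- The inductive core of the theorem, phrased purely ring-theoretically. -/
private lemma exchange_core (hR : IsExchangeRing R) :
    ∀ (n : ℕ) (e : Fin (n + 1) → R), (∀ i, e i * e i = e i) →
    ∃ E : R, E * E = E ∧ (∃ r : Fin (n + 1) → R, E = ∑ i, e i * r i) ∧
      (∃ c : R, e 0 = E * c) ∧
      (∀ i, ∃ A B : R, E * A = A ∧ e i * B = B ∧ B * A = e i) := by
  intro n
  induction n with
  | zero =>
    intro e he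
    refine ⟨e 0, he 0, ⟨fun _ => e 0, by rw [Fin.sum_univ_one, he 0]⟩, ⟨e 0, (he 0).symm⟩, ?_⟩
    intro i
    have hi : i = 0 := Fin.eq_zero i
    subst hi
    exact ⟨e 0, e 0, he 0, he 0, he 0⟩
  | succ n ih =>
    intro e he
    obtain ⟨E, hE, ⟨r, hr⟩, ⟨c, hc⟩, hAB⟩ :=
      ih (fun i => e i.castSucc) (fun i => he _)
    obtain ⟨g, A, B, x, y, hgg, hgxy, hgE, hgA, hfB, hBA⟩ :=
      exchange_pair hR E (e (Fin.last (n + 1))) hE (he _)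
    refine ⟨g, hgg, ⟨Fin.snoc (α := fun _ : Fin (n + 1 + 1) => R) (fun i => r i * x) y, ?_⟩, ⟨E * c, ?_⟩, ?_⟩
    · calc g = (∑ i, e i.castSucc * r i) * x + e (Fin.last (n + 1)) * y := by rw [hgxy, hr]
      _ = ∑ i : Fin (n + 2), e i * Fin.snoc (α := fun _ : Fin (n + 1 + 1) => R) (fun i => r i * x) y i := by
          conv_rhs => rw [Fin.sum_univ_castSucc]
          simp [Fin.snoc_castSucc, Fin.snoc_last, Finset.sum_mul, mul_assoc]
    · have h0 : e (0 : Fin (n + 2)) = E * c := by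
        have := hc
        simpa using this
      rw [h0, ← mul_assoc, hgE]
    · intro i
      induction i using Fin.lastCases with
      | last => exact ⟨A, B, hgA, hfB, hBA⟩
      | cast i =>
        obtain ⟨Ai, Bi, hEA, heB, hBAi⟩ := hAB i
        refine ⟨Ai, Bi, ?_, heB, hBAi⟩
        calc g * Ai = g * (E * Ai) := by rw [hEA]
        _ = (g * E) * Ai := by rw [mul_assoc]
        _ = Ai := by rw [hgE, hEA]

end Aux

/-- Right ideals of `R` are `Rᵐᵒᵖ`-submodules of `R`, with
`xR = Submodule.span Rᵐᵒᵖ {x}`; "`e_iR` is isomorphic to a direct summand of `eR`" is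
expressed by a split `Rᵐᵒᵖ`-linear injection `e_iR → eR`; the two-sided ideal `RxR` is
`TwoSidedIdeal.span {x}`, and the sum of two-sided ideals is their supremum. -/
theorem stmt0 (R : Type u) [Ring R] (hR : IsExchangeRing R)
    (n : ℕ) (e : Fin (n + 1) → R) (he : ∀ i, IsIdempotentElem (e i)) :
    ∃ E : R, IsIdempotentElem E ∧
      (∃ r : Fin (n + 1) → R, E = ∑ i, e i * r i) ∧
      Submodule.span Rᵐᵒᵖ {e 0} ≤ Submodule.span Rᵐᵒᵖ {E} ∧
      (∀ i, ∃ (f : Submodule.span Rᵐᵒᵖ {e i} →ₗ[Rᵐᵒᵖ] Submodule.span Rᵐᵒᵖ {E})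
            (g : Submodule.span Rᵐᵒᵖ {E} →ₗ[Rᵐᵒᵖ] Submodule.span Rᵐᵒᵖ {e i}),
            g.comp f = LinearMap.id) ∧
      TwoSidedIdeal.span {E} = ⨆ i, TwoSidedIdeal.span {e i} := by
  obtain ⟨E, hE, ⟨r, hr⟩, ⟨c, hc⟩, hAB⟩ := exchange_core hR n e (fun i => (he i).eq)
  have memE : ∀ z : R, E * z ∈ Submodule.span Rᵐᵒᵖ {E} := by
    intro z
    exact Submodule.mem_span_singleton.mpr ⟨MulOpposite.op z, rfl⟩
  refine ⟨E, hE, ⟨r, hr⟩, ?_, ?_, ?_⟩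
  · -- e 0 R ⊆ E R
    intro z hz
    obtain ⟨a, ha⟩ := Submodule.mem_span_singleton.mp hz
    have : z = E * (c * a.unop) := by
      rw [← ha, MulOpposite.smul_eq_mul_unop, hc, mul_assoc]
    rw [this]
    exact memE _
  · -- split embeddings
    intro i
    obtain ⟨A, B, hEA, heB, hBA⟩ := hAB i
    have memei : ∀ z : R, e i * z ∈ Submodule.span Rᵐᵒᵖ {e i} := by
      intro z
      exact Submodule.mem_span_singleton.mpr
        ⟨MulOpposite.op z, rfl⟩
    have hfmem : ∀ z ∈ Submodule.span Rᵐᵒᵖ {e i}, lmul A z ∈ Submodule.span Rᵐᵒᵖ {E} := by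
      intro z _
      have : A * z = E * (A * z) := by rw [← mul_assoc, hEA]
      rw [lmul_apply, this]
      exact memE _
    have hgmem : ∀ z ∈ Submodule.span Rᵐᵒᵖ {E}, lmul B z ∈ Submodule.span Rᵐᵒᵖ {e i} := by
      intro z _
      have : B * z = e i * (B * z) := by rw [← mul_assoc, heB]
      rw [lmul_apply, this]
      exact memei _
    refine ⟨(lmul A).restrict hfmem, (lmul B).restrict hgmem, ?_⟩
    apply LinearMap.ext
    rintro ⟨z, hz⟩
    apply Subtype.ext
    obtain ⟨w, hw⟩ := Submodule.mem_span_singleton.mp hz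
    simp only [LinearMap.coe_comp, Function.comp_apply, LinearMap.restrict_apply,
      LinearMap.id_coe, id_eq]
    rw [lmul_apply, lmul_apply, ← hw, MulOpposite.smul_eq_mul_unop, ← mul_assoc, ← mul_assoc,
      hBA, (he i).eq]
  · -- two-sided ideal equality
    apply le_antisymm
    · intro z hz
      refine TwoSidedIdeal.mem_span_iff.mp hz _ ?_
      rw [Set.singleton_subset_iff, hr]
      refine sum_mem (fun i _ => ?_)
      have h1 : e i ∈ (⨆ i, TwoSidedIdeal.span {e i} : TwoSidedIdeal R) :=
        le_iSup (fun i => TwoSidedIdeal.span {e i}) i (TwoSidedIdeal.subset_span rfl)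
      exact TwoSidedIdeal.mul_mem_right _ _ _ h1
    · refine iSup_le fun i => ?_
      intro z hz
      refine TwoSidedIdeal.mem_span_iff.mp hz _ ?_
      rw [Set.singleton_subset_iff]
      obtain ⟨A, B, hEA, heB, hBA⟩ := hAB i
      have : e i = B * (E * A) := by rw [hEA, hBA]
      rw [this]
      exact TwoSidedIdeal.mul_mem_left _ _ _
        (TwoSidedIdeal.mul_mem_right _ _ _ (TwoSidedIdeal.subset_span rfl))
end

section
/- Let R be an exchange ring and a ∈ R an element such that RaR = R. Then there exist idempotents e ∈ aR and f ∈ Ra such that ReR = R and RfR = R. -/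
universe u

section Aux

variable {R : Type u} [Ring R]

lemma corner_exchange (hR : IsExchangeRing R) (q b : R) (hq : IsIdempotentElem q)
    (hbl : q * b = b) :
    ∃ g r s : R, IsIdempotentElem g ∧ g = b * r ∧ q - g = (q - b) * s ∧
      q * g = g ∧ g * q = g := by
  obtain ⟨e, r, s, he, her, hes⟩ := hR b
  have hqe : q * e = e := by rw [her, ← mul_assoc, hbl]
  refine ⟨e * q, r * q, s * q, ?_, ?_, ?_, ?_, ?_⟩
  · show e * q * (e * q) = e * q
    calc e * q * (e * q) = e * (q * e) * q := by rw [mul_assoc, mul_assoc, mul_assoc]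
    _ = e * q := by rw [hqe, he.eq]
  · rw [her, mul_assoc]
  · have key : q * ((1 : R) - e) * q = q - e * q := by
      rw [mul_sub, mul_one, sub_mul, hqe, hq.eq]
    rw [hes] at key
    rw [← key, ← mul_assoc, mul_sub, mul_one, mul_assoc, hbl]
  · rw [← mul_assoc, hqe]
  · rw [mul_assoc, hq.eq]


/-- combine two idempotents in `aR` into one whose ideal contains both -/
lemma combine (hR : IsExchangeRing R) (a e₁ e₂ r₁ r₂ : R)
    (h1 : IsIdempotentElem e₁) (h2 : IsIdempotentElem e₂)
    (he1 : e₁ = a * r₁) (he2 : e₂ = a * r₂) :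
    ∃ h r : R, IsIdempotentElem h ∧ h = a * r ∧
      e₁ ∈ TwoSidedIdeal.span {h} ∧ e₂ ∈ TwoSidedIdeal.span {h} := by
  have hp : IsIdempotentElem (1 - e₁) := h1.one_sub
  have hpe : (1 - e₁) * e₁ = 0 := by rw [sub_mul, one_mul, h1.eq, sub_self]
  have hep : e₁ * (1 - e₁) = 0 := by rw [mul_sub, mul_one, h1.eq, sub_self]
  obtain ⟨g, t, s, hg, hgt, hgs, hpg, hgp⟩ :=
    corner_exchange hR (1 - e₁) ((1 - e₁) * e₂ * (1 - e₁)) hp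
      (by rw [← mul_assoc, ← mul_assoc, hp.eq])
  -- orthogonality
  have hge1 : g * e₁ = 0 := by rw [← hgp, mul_assoc, hpe, mul_zero]
  have he1g : e₁ * g = 0 := by rw [← hpg, ← mul_assoc, hep, zero_mul]
  -- h := e₁ + g is idempotent
  have hh : IsIdempotentElem (e₁ + g) := by
    show (e₁ + g) * (e₁ + g) = e₁ + g
    rw [add_mul, mul_add, mul_add, h1.eq, hg.eq, he1g, hge1, add_zero, zero_add]
  -- h ∈ aR : via k = e₂ * w with (1-e₁) * (e₂ * w) = g
  set w := (1 - e₁) * (t * g) with hw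
  have hpk : (1 - e₁) * (e₂ * w) = g := by
    rw [hw]
    calc (1 - e₁) * (e₂ * ((1 - e₁) * (t * g)))
        = ((1 - e₁) * e₂ * (1 - e₁) * t) * g := by simp only [mul_assoc]
    _ = g := by rw [← hgt, hg.eq]
  have hgk : g = e₂ * w - e₁ * (e₂ * w) := by
    rw [← hpk]; noncomm_ring
  have hhr : e₁ + g = a * (r₁ + r₂ * w - r₁ * (e₂ * w)) := by
    rw [hgk, he1, he2]; noncomm_ring
  -- memberships
  set I := TwoSidedIdeal.span {e₁ + g} with hI
  have hmemh : e₁ + g ∈ I := TwoSidedIdeal.subset_span rfl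
  have hm1 : e₁ ∈ I := by
    have : e₁ * (e₁ + g) ∈ I := I.mul_mem_left _ _ hmemh
    rwa [mul_add, h1.eq, he1g, add_zero] at this
  have hmg : g ∈ I := by
    have : e₁ + g - e₁ ∈ I := I.sub_mem hmemh hm1
    rwa [add_sub_cancel_left] at this
  have hm2 : e₂ ∈ I := by
    -- e₂ = e₂*e₁ + e₂*g + (e₂*e₁)*(e₂*((1-e₁)*s))
    have key : e₂ = e₂ * e₁ + e₂ * g + (e₂ * e₁) * (e₂ * ((1 - e₁) * s)) := by
      have h5 : e₂ * ((1 - e₁) - g) = e₂ * (((1 - e₁) - (1 - e₁) * e₂ * (1 - e₁)) * s) := by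
        rw [hgs]
      have h6 : e₂ * ((1 - e₁) - (1 - e₁) * e₂ * (1 - e₁)) * s
          = (e₂ * e₁) * (e₂ * ((1 - e₁) * s)) := by
        have hB : e₂ * (1 - e₁) * e₂ = e₂ - e₂ * e₁ * e₂ := by
          rw [mul_sub, mul_one, sub_mul, h2.eq]
        have hA : e₂ * (1 - e₁) * (e₂ * (1 - e₁)) = (e₂ - e₂ * e₁ * e₂) * (1 - e₁) := by
          calc e₂ * (1 - e₁) * (e₂ * (1 - e₁))
              = (e₂ * (1 - e₁) * e₂) * (1 - e₁) := by simp only [mul_assoc]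
          _ = (e₂ - e₂ * e₁ * e₂) * (1 - e₁) := by rw [hB]
        have expand : e₂ * ((1 - e₁) - (1 - e₁) * e₂ * (1 - e₁))
            = e₂ * e₁ * (e₂ * (1 - e₁)) := by
          calc e₂ * ((1 - e₁) - (1 - e₁) * e₂ * (1 - e₁))
              = e₂ * (1 - e₁) - e₂ * (1 - e₁) * (e₂ * (1 - e₁)) := by noncomm_ring
          _ = e₂ * (1 - e₁) - (e₂ - e₂ * e₁ * e₂) * (1 - e₁) := by rw [hA]
          _ = e₂ * e₁ * (e₂ * (1 - e₁)) := by noncomm_ring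
        rw [← mul_assoc, expand]; noncomm_ring
      rw [← mul_assoc, h6] at h5
      have h7 : e₂ * (1 - e₁) = e₂ - e₂ * e₁ := by noncomm_ring
      -- h5 : e₂ * ((1-e₁) - g) = (e₂*e₁)*(e₂*((1-e₁)*s))
      have h8 : e₂ - e₂ * e₁ - e₂ * g = (e₂ * e₁) * (e₂ * ((1 - e₁) * s)) := by
        rw [← h5]; noncomm_ring
      linear_combination (norm := noncomm_ring) h8
    rw [key]
    exact I.add_mem (I.add_mem (I.mul_mem_left _ _ hm1) (I.mul_mem_left _ _ hmg))
      (I.mul_mem_right _ _ (I.mul_mem_left _ _ hm1))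
  exact ⟨e₁ + g, _, hh, hhr, hm1, hm2⟩

lemma list_sum_conj (a u v : R) (l : List (R × R)) :
    ((l.map fun p => (u * p.1, p.2 * v)).map fun p => p.1 * a * p.2).sum
      = u * ((l.map fun p => p.1 * a * p.2).sum) * v := by
  induction l with
  | nil => simp
  | cons x tl ih =>
    simp only [List.map_cons, List.sum_cons]
    rw [ih]; noncomm_ring

lemma main_ind (hR : IsExchangeRing R) (a : R) :
    ∀ (n : ℕ) (l : List (R × R)), l.length = n → ∀ q : R, IsIdempotentElem q →
      (l.map fun p => p.1 * a * p.2).sum = q →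
      ∃ e r : R, IsIdempotentElem e ∧ e = a * r ∧ q ∈ TwoSidedIdeal.span {e} := by
  intro n
  induction n with
  | zero =>
    intro l hl q hq hsum
    rw [List.length_eq_zero_iff] at hl; subst hl
    simp only [List.map_nil, List.sum_nil] at hsum
    refine ⟨0, 0, by simp [IsIdempotentElem], by simp, ?_⟩
    rw [← hsum]; exact (TwoSidedIdeal.span {(0 : R)}).zero_mem
  | succ n ih =>
    intro l hl q hq hsum
    match l, hl with
    | hd :: tl, hl =>
    have htl : tl.length = n := by simpa using hl
    simp only [List.map_cons, List.sum_cons] at hsum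
    set S := (List.map (fun p => p.1 * a * p.2) tl).sum with hS
    obtain ⟨g, r', s', hg, hgr, hgs, hqg, hgq⟩ :=
      corner_exchange hR q (q * (hd.1 * a * hd.2) * q) hq
        (by rw [← mul_assoc, ← mul_assoc, hq.eq])
    have hq' : IsIdempotentElem (q - g) := by
      show (q - g) * (q - g) = q - g
      simp only [sub_mul, mul_sub]
      rw [hq.eq, hqg, hgq, hg.eq]; abel
    have hqb : q - q * (hd.1 * a * hd.2) * q = q * S * q := by
      have h0 : hd.1 * a * hd.2 = q - S := eq_sub_of_add_eq hsum
      rw [h0]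
      calc q - q * (q - S) * q = q - (q * q * q - q * S * q) := by rw [mul_sub, sub_mul]
      _ = q * S * q := by rw [hq.eq, hq.eq, sub_sub_cancel]
    have hrep : ((tl.map fun p => (q * p.1, p.2 * (q * s'))).map fun p => p.1 * a * p.2).sum
        = q - g := by
      rw [list_sum_conj, ← mul_assoc, ← hS, ← hqb, ← hgs]
    obtain ⟨e₁, r₁, he₁, he₁r, hm₁⟩ := ih _ (by simpa using htl) _ hq' hrep
    -- base piece: g = X * (a * Y)
    set X := q * hd.1 with hX
    set Y := hd.2 * (q * r') with hY
    have hgfact : X * (a * Y) = g := by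
      rw [hgr, hX, hY]; simp only [mul_assoc]
    have hgfact2 : ∀ z : R, X * (a * (Y * z)) = g * z := by
      intro z
      calc X * (a * (Y * z)) = (X * (a * Y)) * z := by simp only [mul_assoc]
      _ = g * z := by rw [hgfact]
    set c := a * (Y * X) with hc
    have hc3 : c * (c * c) = c * c := by
      rw [hc]
      calc a * (Y * X) * (a * (Y * X) * (a * (Y * X)))
          = a * (Y * (X * (a * (Y * (X * (a * (Y * X))))))) := by simp only [mul_assoc]
      _ = a * (Y * (g * (X * (a * (Y * X))))) := by rw [hgfact2]
      _ = a * (Y * (g * (g * X))) := by rw [hgfact2]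
      _ = a * (Y * (g * X)) := by rw [← mul_assoc g g, hg.eq]
      _ = a * (Y * (X * (a * (Y * X)))) := by rw [hgfact2]
      _ = a * (Y * X) * (a * (Y * X)) := by simp only [mul_assoc]
    have he₂ : IsIdempotentElem (c * c) := by
      show c * c * (c * c) = c * c
      calc c * c * (c * c) = c * (c * (c * c)) := by simp only [mul_assoc]
      _ = c * c := by rw [hc3, hc3]
    have hr₂ : c * c = a * (Y * (g * X)) := by
      rw [hc]
      calc a * (Y * X) * (a * (Y * X)) = a * (Y * (X * (a * (Y * X)))) := by
            simp only [mul_assoc]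
      _ = a * (Y * (g * X)) := by rw [hgfact2]
    obtain ⟨h, rh, hh, hhr, hmh1, hmh2⟩ :=
      combine hR a e₁ (c * c) r₁ (Y * (g * X)) he₁ he₂ he₁r hr₂
    have gid : X * (c * c) * (a * Y) = g := by
      calc X * (c * c) * (a * Y) = X * (a * (Y * (X * (a * (Y * (X * (a * Y))))))) := by
            rw [hc]; simp only [mul_assoc]
      _ = g * (g * g) := by rw [hgfact, hgfact2, hgfact2]
      _ = g := by rw [hg.eq, hg.eq]
    have hgmem : g ∈ TwoSidedIdeal.span {h} := by
      rw [← gid]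
      exact (TwoSidedIdeal.span {h}).mul_mem_right _ _
        ((TwoSidedIdeal.span {h}).mul_mem_left _ _ hmh2)
    have hq'mem : q - g ∈ TwoSidedIdeal.span {h} := by
      rw [TwoSidedIdeal.mem_span_iff] at hm₁
      exact hm₁ _ (Set.singleton_subset_iff.mpr hmh1)
    refine ⟨h, rh, hh, hhr, ?_⟩
    have := (TwoSidedIdeal.span {h}).add_mem hq'mem hgmem
    rwa [sub_add_cancel] at this

end Aux

/-- The two-sided ideal `RxR` generated by `x` is `TwoSidedIdeal.span {x}`. -/
theorem stmt1 (R : Type u) [Ring R] (hR : IsExchangeRing R)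
    (a : R) (ha : TwoSidedIdeal.span ({a} : Set R) = ⊤) :
    ∃ e f r s : R, IsIdempotentElem e ∧ IsIdempotentElem f ∧
      e = a * r ∧ f = s * a ∧
      TwoSidedIdeal.span ({e} : Set R) = ⊤ ∧ TwoSidedIdeal.span ({f} : Set R) = ⊤ := by
  classical
  -- the ideal of finite sums ∑ xᵢ a yᵢ
  set J : TwoSidedIdeal R := TwoSidedIdeal.mk'
    {z | ∃ l : List (R × R), (l.map fun p => p.1 * a * p.2).sum = z}
    ⟨[], by simp⟩
    (fun {x y} hx hy => by
      obtain ⟨l₁, h₁⟩ := hx; obtain ⟨l₂, h₂⟩ := hy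
      exact ⟨l₁ ++ l₂, by simp [List.sum_append, h₁, h₂]⟩)
    (fun {x} hx => by
      obtain ⟨l, hlx⟩ := hx
      refine ⟨l.map fun p => ((-1 : R) * p.1, p.2 * 1), ?_⟩
      rw [list_sum_conj, hlx]; simp)
    (fun {x y} hy => by
      obtain ⟨l, hly⟩ := hy
      refine ⟨l.map fun p => (x * p.1, p.2 * 1), ?_⟩
      rw [list_sum_conj, hly]; simp)
    (fun {x y} hx => by
      obtain ⟨l, hlx⟩ := hx
      refine ⟨l.map fun p => ((1 : R) * p.1, p.2 * y), ?_⟩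
      rw [list_sum_conj, hlx]; simp) with hJ
  have haJ : a ∈ J := by
    rw [hJ, TwoSidedIdeal.mem_mk']
    exact ⟨[(1, 1)], by simp⟩
  have h1span : (1 : R) ∈ TwoSidedIdeal.span ({a} : Set R) := by
    rw [ha]; exact TwoSidedIdeal.mem_top _
  have h1J : (1 : R) ∈ J := by
    rw [TwoSidedIdeal.mem_span_iff] at h1span
    exact h1span J (Set.singleton_subset_iff.mpr haJ)
  rw [hJ, TwoSidedIdeal.mem_mk'] at h1J
  obtain ⟨l, hl⟩ := h1J
  obtain ⟨e, r, he, her, h1mem⟩ :=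
    main_ind hR a l.length l rfl 1 (by simp [IsIdempotentElem]) hl
  -- the dual idempotent f = (r*a)*(r*a)
  have hd3 : r * a * (r * a) * (r * a) = r * a * (r * a) := by
    calc r * a * (r * a) * (r * a) = r * ((a * r) * (a * r)) * a := by simp only [mul_assoc]
    _ = r * (a * r) * a := by rw [← her, he.eq, her]
    _ = r * a * (r * a) := by simp only [mul_assoc]
  have hf : IsIdempotentElem (r * a * (r * a)) := by
    show r * a * (r * a) * (r * a * (r * a)) = r * a * (r * a)
    calc r * a * (r * a) * (r * a * (r * a))
        = r * a * (r * a) * (r * a) * (r * a) := by simp only [mul_assoc]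
    _ = r * a * (r * a) := by rw [hd3, hd3]
  have hef : a * (r * a * (r * a) * r) = e := by
    calc a * (r * a * (r * a) * r) = (a * r) * ((a * r) * (a * r)) := by simp only [mul_assoc]
    _ = e := by rw [← her, he.eq, he.eq]
  have hespan : TwoSidedIdeal.span ({e} : Set R) = ⊤ := by
    rw [eq_top_iff]
    intro x _
    have := (TwoSidedIdeal.span {e}).mul_mem_left x _ h1mem
    rwa [mul_one] at this
  have hfspan : TwoSidedIdeal.span ({r * a * (r * a)} : Set R) = ⊤ := by
    rw [eq_top_iff]
    intro x _
    have hemem : e ∈ TwoSidedIdeal.span {r * a * (r * a)} := by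
      rw [← hef]
      exact (TwoSidedIdeal.span _).mul_mem_left _ _
        ((TwoSidedIdeal.span _).mul_mem_right _ _ (TwoSidedIdeal.subset_span rfl))
    have h1f : (1 : R) ∈ TwoSidedIdeal.span {r * a * (r * a)} := by
      rw [TwoSidedIdeal.mem_span_iff] at h1mem
      exact h1mem _ (Set.singleton_subset_iff.mpr hemem)
    have := (TwoSidedIdeal.span {r * a * (r * a)}).mul_mem_left x _ h1f
    rwa [mul_one] at this
  exact ⟨e, r * a * (r * a), r, r * a * r, he, hf, her,
    by simp only [mul_assoc], hespan, hfspan⟩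
end

section
/- Let R be any unital ring, n ≥ 1, and A ∈ GL_n(R) an invertible matrix having at least one entry that is an idempotent of R. Then there exist matrices E, F ∈ E_n(R) such that the matrix EAF has (1,1) entry equal to 1 and all other entries of its first row and of its first column equal to 0. -/
universe u

/-- `E_ι(R)`: the subgroup of `GL_ι(R) = (Matrix ι ι R)ˣ` generated by the elementary
matrices (transvections) `1 + r·e_{ij}`, `i ≠ j`. -/
def ElementarySubgroup (ι : Type*) [Fintype ι] [DecidableEq ι] (R : Type*) [Ring R] :
    Subgroup (Matrix ι ι R)ˣ :=
  Subgroup.closure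
    {E : (Matrix ι ι R)ˣ | ∃ i j : ι, ∃ r : R, i ≠ j ∧ E.val = 1 + Matrix.single i j r}

set_option linter.unusedSectionVars false
namespace ElemAux

open Matrix

variable {ι : Type*} [Fintype ι] [DecidableEq ι] {R : Type u} [Ring R]

/-- transvection as a unit -/
def tU (i j : ι) (h : i ≠ j) (r : R) : (Matrix ι ι R)ˣ where
  val := 1 + Matrix.single i j r
  inv := 1 + Matrix.single i j (-r)
  val_inv := by
    have h0 : Matrix.single i j r * Matrix.single i j (-r) = 0 :=
      Matrix.single_mul_single_of_ne _ _ _ _ h.symm _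
    have h1 : Matrix.single i j r + Matrix.single i j (-r) = 0 := by
      rw [← Matrix.single_add]; simp
    simp only [mul_add, add_mul, one_mul, mul_one, h0, add_zero, add_assoc, h1]
  inv_val := by
    have h0 : Matrix.single i j (-r) * Matrix.single i j r = 0 :=
      Matrix.single_mul_single_of_ne _ _ _ _ h.symm _
    have h1 : Matrix.single i j (-r) + Matrix.single i j r = 0 := by
      rw [← Matrix.single_add]; simp
    simp only [mul_add, add_mul, one_mul, mul_one, h0, add_zero, add_assoc, h1]

@[simp] lemma tU_val (i j : ι) (h : i ≠ j) (r : R) :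
    (tU i j h r).val = 1 + Matrix.single i j r := rfl

lemma tU_mem (i j : ι) (h : i ≠ j) (r : R) : tU i j h r ∈ ElementarySubgroup ι R :=
  Subgroup.subset_closure ⟨i, j, r, h, rfl⟩


/-- matrix supported on column `z`, entries `v` -/
def colM (z : ι) (v : ι → R) : Matrix ι ι R := Matrix.of fun i j => if j = z then v i else 0

/-- matrix supported on row `z`, entries `w` -/
def rowM (z : ι) (w : ι → R) : Matrix ι ι R := Matrix.of fun i j => if i = z then w j else 0

@[simp] lemma colM_apply (z : ι) (v : ι → R) (i j : ι) :
    colM z v i j = if j = z then v i else 0 := rfl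

@[simp] lemma rowM_apply (z : ι) (w : ι → R) (i j : ι) :
    rowM z w i j = if i = z then w j else 0 := rfl

lemma colM_mul_colM (z : ι) (v w : ι → R) (hw : w z = 0) : colM z v * colM z w = 0 := by
  ext i j
  rw [Matrix.mul_apply]
  apply Finset.sum_eq_zero
  intro k _
  by_cases hk : k = z <;> simp [hk, hw]

lemma rowM_mul_rowM (z : ι) (v w : ι → R) (hv : v z = 0) : rowM z v * rowM z w = 0 := by
  ext i j
  rw [Matrix.mul_apply]
  apply Finset.sum_eq_zero
  intro k _
  by_cases hk : k = z <;> simp [hk, hv]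

lemma colM_add_colM (z : ι) (v w : ι → R) : colM z v + colM z w = colM z (v + w) := by
  ext i j
  by_cases hj : j = z <;> simp [hj]

lemma rowM_add_rowM (z : ι) (v w : ι → R) : rowM z v + rowM z w = rowM z (v + w) := by
  ext i j
  by_cases hi : i = z <;> simp [hi]

@[simp] lemma colM_zero (z : ι) : colM z (0 : ι → R) = 0 := by
  ext i j; by_cases hj : j = z <;> simp [hj]

@[simp] lemma rowM_zero (z : ι) : rowM z (0 : ι → R) = 0 := by
  ext i j; by_cases hi : i = z <;> simp [hi]

/-- unit `1 + colM z v` for `v z = 0` -/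
def LU (z : ι) (v : ι → R) (hv : v z = 0) : (Matrix ι ι R)ˣ where
  val := 1 + colM z v
  inv := 1 + colM z (-v)
  val_inv := by
    have h0 : colM z v * colM z (-v) = 0 := colM_mul_colM z v (-v) (by simp [hv])
    have h1 : colM z v + colM z (-v) = 0 := by
      rw [colM_add_colM]; simp
    simp only [mul_add, add_mul, one_mul, mul_one, h0, add_zero, add_assoc, h1]
  inv_val := by
    have h0 : colM z (-v) * colM z v = 0 := colM_mul_colM z (-v) v hv
    have h1 : colM z (-v) + colM z v = 0 := by
      rw [colM_add_colM]; simp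
    simp only [mul_add, add_mul, one_mul, mul_one, h0, add_zero, add_assoc, h1]

@[simp] lemma LU_val (z : ι) (v : ι → R) (hv : v z = 0) : (LU z v hv).val = 1 + colM z v := rfl

/-- unit `1 + rowM z w` for `w z = 0` -/
def RU (z : ι) (w : ι → R) (hw : w z = 0) : (Matrix ι ι R)ˣ where
  val := 1 + rowM z w
  inv := 1 + rowM z (-w)
  val_inv := by
    have h0 : rowM z w * rowM z (-w) = 0 := rowM_mul_rowM z w (-w) hw
    have h1 : rowM z w + rowM z (-w) = 0 := by
      rw [rowM_add_rowM]; simp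
    simp only [mul_add, add_mul, one_mul, mul_one, h0, add_zero, add_assoc, h1]
  inv_val := by
    have h0 : rowM z (-w) * rowM z w = 0 := rowM_mul_rowM z (-w) w (by simp [hw])
    have h1 : rowM z (-w) + rowM z w = 0 := by
      rw [rowM_add_rowM]; simp
    simp only [mul_add, add_mul, one_mul, mul_one, h0, add_zero, add_assoc, h1]

@[simp] lemma RU_val (z : ι) (w : ι → R) (hw : w z = 0) : (RU z w hw).val = 1 + rowM z w := rfl


lemma mem_of_val_eq_colM (z : ι) :
    ∀ s : Finset ι, ∀ v : ι → R, (∀ k, k ∉ s → v k = 0) → v z = 0 →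
      ∀ U : (Matrix ι ι R)ˣ, U.val = 1 + colM z v → U ∈ ElementarySubgroup ι R := by
  intro s
  induction s using Finset.induction_on with
  | empty =>
    intro v h0 hz U hU
    have hv : v = 0 := funext fun k => h0 k (Finset.notMem_empty k)
    have : U = 1 := Units.ext (by simp [hU, hv])
    rw [this]; exact one_mem _
  | @insert a s' ha ih =>
    intro v h0 hz U hU
    by_cases haz : a = z
    · exact ih v (fun k hk => by
        by_cases hka : k = a
        · subst hka; rw [haz]; exact hz
        · exact h0 k (by simp [hka, hk])) hz U hU
    · set v' := Function.update v a 0 with hv'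
      have hcol : colM z v = Matrix.single a z (v a) + colM z v' := by
        ext i j
        by_cases hj : j = z
        · subst hj
          by_cases hia : i = a
          · subst hia; simp [hv', Function.update]
          · simp [hv', Function.update, hia, Matrix.single_apply_of_ne,
              Ne.symm hia]
        · simp [hj, Matrix.single_apply_of_col_ne _ _ (fun h => hj h.symm)]
      have hzero : Matrix.single a z (-(v a)) * colM z v' = 0 := by
        ext i j
        by_cases hia : i = a
        · subst hia
          rw [Matrix.single_mul_apply_same]
          simp [hv', Function.update, hz, Ne.symm haz]
        · rw [Matrix.mul_apply]
          rw [show (0 : Matrix ι ι R) i j = 0 from rfl]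
          apply Finset.sum_eq_zero
          intro k _
          simp [Matrix.single_apply_of_row_ne (Ne.symm hia)]
      have key : U = tU a z haz (v a) * ((tU a z haz (v a))⁻¹ * U) := by
        rw [← mul_assoc, mul_inv_cancel, one_mul]
      have hval : ((tU a z haz (v a))⁻¹ * U).val = 1 + colM z v' := by
        have : ((tU a z haz (v a))⁻¹ : (Matrix ι ι R)ˣ).val
            = 1 + Matrix.single a z (-(v a)) := rfl
        rw [Units.val_mul, this, hU, hcol]
        simp only [mul_add, add_mul, one_mul, mul_one, hzero]
        have h0 : Matrix.single a z (-(v a)) * Matrix.single a z (v a) = 0 :=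
          Matrix.single_mul_single_of_ne _ _ _ _ (Ne.symm haz) _
        have h1 : Matrix.single a z (-(v a)) + Matrix.single a z (v a) = 0 := by
          rw [← Matrix.single_add]; simp
        rw [h0]
        ext i j
        by_cases hia : i = a <;> by_cases hjz : j = z
        · subst hia; subst hjz
          simp [hv', Function.update, Matrix.one_apply, haz]
        · subst hia
          simp [hv', Function.update, Matrix.one_apply, hjz, Ne.symm hjz]
        · subst hjz
          simp [hv', Function.update, Matrix.one_apply, hia, Ne.symm hia]
        · simp [hv', Function.update, Matrix.one_apply, hia, hjz, Ne.symm hia, Ne.symm hjz]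
      rw [key]
      exact mul_mem (tU_mem _ _ _ _)
        (ih v' (fun k hk => by
          by_cases hka : k = a
          · subst hka; simp [hv']
          · simp [hv', Function.update, hka]
            exact h0 k (by simp [hka, hk])) (by simp [hv', Function.update, hz, Ne.symm haz]) _ hval)

lemma LU_mem (z : ι) (v : ι → R) (hv : v z = 0) : LU z v hv ∈ ElementarySubgroup ι R :=
  mem_of_val_eq_colM z Finset.univ v (fun k hk => absurd (Finset.mem_univ k) hk) hv _ rfl

lemma mem_of_val_eq_rowM (z : ι) :
    ∀ s : Finset ι, ∀ v : ι → R, (∀ k, k ∉ s → v k = 0) → v z = 0 →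
      ∀ U : (Matrix ι ι R)ˣ, U.val = 1 + rowM z v → U ∈ ElementarySubgroup ι R := by
  intro s
  induction s using Finset.induction_on with
  | empty =>
    intro v h0 hz U hU
    have hv : v = 0 := funext fun k => h0 k (Finset.notMem_empty k)
    have : U = 1 := Units.ext (by simp [hU, hv])
    rw [this]; exact one_mem _
  | @insert a s' ha ih =>
    intro v h0 hz U hU
    by_cases haz : a = z
    · exact ih v (fun k hk => by
        by_cases hka : k = a
        · subst hka; rw [haz]; exact hz
        · exact h0 k (by simp [hka, hk])) hz U hU
    · set v' := Function.update v a 0 with hv'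
      have hrow : rowM z v = Matrix.single z a (v a) + rowM z v' := by
        ext i j
        by_cases hi : i = z
        · subst hi
          by_cases hja : j = a
          · subst hja; simp [hv', Function.update]
          · simp [hv', Function.update, hja, Ne.symm hja]
        · simp [hi, Matrix.single_apply_of_row_ne (fun h => hi h.symm)]
      have hzero : rowM z v' * Matrix.single z a (-(v a)) = 0 := by
        ext i j
        by_cases hja : j = a
        · subst hja
          rw [Matrix.mul_single_apply_same]
          simp [hv', Function.update, hz, Ne.symm haz]
        · rw [Matrix.mul_apply]
          rw [show (0 : Matrix ι ι R) i j = 0 from rfl]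
          apply Finset.sum_eq_zero
          intro k _
          simp [Matrix.single_apply_of_col_ne _ _ (Ne.symm hja)]
      have key : U = (U * (tU z a (Ne.symm haz) (v a))⁻¹) * tU z a (Ne.symm haz) (v a) := by
        rw [mul_assoc, inv_mul_cancel, mul_one]
      have hval : (U * (tU z a (Ne.symm haz) (v a))⁻¹).val = 1 + rowM z v' := by
        have : ((tU z a (Ne.symm haz) (v a))⁻¹ : (Matrix ι ι R)ˣ).val
            = 1 + Matrix.single z a (-(v a)) := rfl
        rw [Units.val_mul, this, hU, hrow]
        simp only [mul_add, add_mul, one_mul, mul_one, hzero]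
        have h0 : Matrix.single z a (v a) * Matrix.single z a (-(v a)) = 0 :=
          Matrix.single_mul_single_of_ne _ _ _ _ haz _
        rw [h0]
        ext i j
        by_cases hiz : i = z <;> by_cases hja : j = a
        · subst hiz; subst hja
          simp [hv', Function.update, Matrix.one_apply, haz, Ne.symm haz]
        · subst hiz
          simp [hv', Function.update, Matrix.one_apply, hja, Ne.symm hja]
        · subst hja
          simp [hv', Function.update, Matrix.one_apply, hiz, Ne.symm hiz]
        · simp [hv', Function.update, Matrix.one_apply, hiz, hja, Ne.symm hiz, Ne.symm hja]
      rw [key]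
      exact mul_mem
        (ih v' (fun k hk => by
          by_cases hka : k = a
          · subst hka; simp [hv']
          · simp [hv', Function.update, hka]
            exact h0 k (by simp [hka, hk])) (by simp [hv', Function.update, haz, hz, Ne.symm haz]) _ hval)
        (tU_mem _ _ _ _)

lemma RU_mem (z : ι) (w : ι → R) (hw : w z = 0) : RU z w hw ∈ ElementarySubgroup ι R :=
  mem_of_val_eq_rowM z Finset.univ w (fun k hk => absurd (Finset.mem_univ k) hk) hw _ rfl


/-! entry computations -/

lemma mul_LU_apply (M : Matrix ι ι R) (z : ι) (v : ι → R) (i j : ι) :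
    (M * (1 + colM z v)) i j = M i j + if j = z then ∑ k, M i k * v k else 0 := by
  rw [mul_add, mul_one, Matrix.add_apply, Matrix.mul_apply]
  congr 1
  by_cases hj : j = z
  · subst hj; simp
  · simp [hj]

lemma LU_mul_apply (z : ι) (v : ι → R) (M : Matrix ι ι R) (i j : ι) :
    ((1 + colM z v) * M) i j = M i j + v i * M z j := by
  rw [add_mul, one_mul, Matrix.add_apply, Matrix.mul_apply]
  congr 1
  rw [Finset.sum_eq_single z]
  · simp
  · intro k _ hk; simp [hk]
  · intro h; exact absurd (Finset.mem_univ z) h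

lemma mul_RU_apply (M : Matrix ι ι R) (z : ι) (w : ι → R) (i j : ι) :
    (M * (1 + rowM z w)) i j = M i j + M i z * w j := by
  rw [mul_add, mul_one, Matrix.add_apply, Matrix.mul_apply]
  congr 1
  rw [Finset.sum_eq_single z]
  · simp
  · intro k _ hk; simp [hk]
  · intro h; exact absurd (Finset.mem_univ z) h

/-! swaps -/

def swapU (i j : ι) (h : i ≠ j) : (Matrix ι ι R)ˣ :=
  tU i j h 1 * tU j i h.symm (-1) * tU i j h 1

lemma swapU_mem (i j : ι) (h : i ≠ j) : (swapU i j h : (Matrix ι ι R)ˣ) ∈ ElementarySubgroup ι R :=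
  mul_mem (mul_mem (tU_mem _ _ _ _) (tU_mem _ _ _ _)) (tU_mem _ _ _ _)

lemma swapU_val (i j : ι) (h : i ≠ j) :
    (swapU i j h : (Matrix ι ι R)ˣ).val
      = 1 + Matrix.single i j (1 : R) + Matrix.single j i (-1 : R)
        + Matrix.single i i (-1 : R) + Matrix.single j j (-1 : R) := by
  rw [swapU, Units.val_mul, Units.val_mul]
  have h1 : Matrix.single i j (1:R) * Matrix.single j i (-1:R)
      = Matrix.single i i (-1:R) := by
    rw [Matrix.single_mul_single_same]; norm_num
  have h2 : Matrix.single j i (-1:R) * Matrix.single i j (1:R)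
      = Matrix.single j j (-1:R) := by
    rw [Matrix.single_mul_single_same]; norm_num
  have h3 : Matrix.single i j (1:R) * Matrix.single i j (1:R) = 0 :=
    Matrix.single_mul_single_of_ne _ _ _ _ h.symm _
  have h4 : Matrix.single i i (-1:R) * Matrix.single i j (1:R)
      = Matrix.single i j (-1:R) := by
    rw [Matrix.single_mul_single_same]; norm_num
  have h5 : Matrix.single i j (1:R) + Matrix.single i j (-1:R) = 0 := by
    rw [← Matrix.single_add]; simp
  simp only [tU_val, mul_add, add_mul, one_mul, mul_one, h1, h2, h3, h4]
  rw [eq_neg_of_add_eq_zero_left h5]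
  abel

/-! Whitehead-type diagonal unit -/

lemma dU_val (z w : ι) (hzw : z ≠ w) (e b : R) (hbe : b * e = 0) :
    ((tU z w hzw e) * (tU w z hzw.symm b) * (tU z w hzw (-e)) * (tU w z hzw.symm (-b))
        : (Matrix ι ι R)ˣ).val
      = 1 + Matrix.single z z (e * b) := by
  have hebe : e * b * e = 0 := by rw [mul_assoc, hbe, mul_zero]
  simp only [Units.val_mul, tU_val]
  simp only [mul_add, add_mul, one_mul, mul_one, Matrix.single_mul_single_same,
    Matrix.single_mul_single_of_ne _ _ _ _ hzw, Matrix.single_mul_single_of_ne _ _ _ _ hzw.symm]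
  have hneg : ∀ (i j : ι) (c : R),
      Matrix.single i j (-c) = -Matrix.single i j c := by
    intro i j c
    ext a b
    simp only [Matrix.single, Matrix.of_apply, Matrix.neg_apply]
    split_ifs <;> simp
  simp only [mul_neg, neg_mul, hbe, hebe, neg_neg, neg_zero, zero_mul, mul_zero,
    Matrix.single_zero, add_zero, zero_add, hneg]
  abel


/-! the key reduction lemma -/

lemma key (z w : ι) (hw : w ≠ z) (M : (Matrix ι ι R)ˣ)
    (he : IsIdempotentElem (M.val z z)) :
    ∃ E F : (Matrix ι ι R)ˣ, E ∈ ElementarySubgroup ι R ∧ F ∈ ElementarySubgroup ι R ∧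
      (E.val * M.val * F.val) z z = 1 ∧
      (∀ j, j ≠ z → (E.val * M.val * F.val) z j = 0) ∧
      (∀ i, i ≠ z → (E.val * M.val * F.val) i z = 0) := by
  set e : R := M.val z z with hedef
  set B : Matrix ι ι R := (M⁻¹).val with hBdef
  have hMB : ∑ k, M.val z k * B k z = 1 := by
    have h := M.mul_inv
    have h2 := congrFun (congrFun h z) z
    rwa [Matrix.mul_apply, Matrix.one_apply_eq] at h2
  have hee : e * e = e := he
  have h1e : (1 - e) * e = 0 := by rw [sub_mul, one_mul, hee, sub_self]
  set b : R := B z z * (1 - e) with hbdef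
  have hbe : b * e = 0 := by rw [hbdef, mul_assoc, h1e, mul_zero]
  set x : R := e * b with hxdef
  have hx2 : x * x = 0 := by
    rw [hxdef, mul_assoc e b (e * b), ← mul_assoc b e b, hbe, zero_mul, mul_zero]
  have hu : (1 - x) * (1 + x) = 1 := by
    have hexp : (1 - x) * (1 + x) = 1 - x * x := by noncomm_ring
    rw [hexp, hx2, sub_zero]
  have hu' : (1 + x) * (1 - x) = 1 := by
    have hexp : (1 + x) * (1 - x) = 1 - x * x := by noncomm_ring
    rw [hexp, hx2, sub_zero]
  -- step 1: column operation creating the unit 1 - x at (z,z)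
  set v₁ : ι → R := fun k => if k = z then 0 else B k z * (1 - e) with hv₁def
  have hv₁z : v₁ z = 0 := if_pos rfl
  set M₁ : Matrix ι ι R := M.val * (LU z v₁ hv₁z).val with hM₁def
  have c1 : M₁ z z = 1 - x := by
    rw [hM₁def, LU_val, mul_LU_apply, if_pos rfl]
    have hterm : ∀ k, M.val z k * v₁ k
        = M.val z k * B k z * (1 - e)
          - (if k = z then M.val z z * B z z * (1 - e) else 0) := by
      intro k
      by_cases hk : k = z
      · subst hk; simp [hv₁def]
      · simp [hv₁def, hk, mul_assoc]
    rw [Finset.sum_congr rfl fun k _ => hterm k, Finset.sum_sub_distrib]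
    rw [← Finset.sum_mul, hMB, one_mul]
    rw [Finset.sum_ite_eq' Finset.univ z
      (fun _ => M.val z z * B z z * (1 - e)), if_pos (Finset.mem_univ z)]
    have hxx : M.val z z * B z z * (1 - e) = x := by
      rw [hxdef, hbdef, ← hedef, mul_assoc]
    rw [hxx]
    abel
  -- step 2: clear row z
  set w₂ : ι → R := fun k => if k = z then 0 else -((1 + x) * M₁ z k) with hw₂def
  have hw₂z : w₂ z = 0 := if_pos rfl
  set M₂ : Matrix ι ι R := M₁ * (RU z w₂ hw₂z).val with hM₂def
  have c2 : M₂ z z = 1 - x := by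
    rw [hM₂def, RU_val, mul_RU_apply, hw₂z, mul_zero, add_zero, c1]
  have c3 : ∀ k, k ≠ z → M₂ z k = 0 := by
    intro k hk
    rw [hM₂def, RU_val, mul_RU_apply, c1]
    simp only [hw₂def, if_neg hk]
    rw [mul_neg, ← mul_assoc, hu, one_mul, add_neg_cancel]
  have c4 : ∀ m, M₂ m z = M₁ m z := by
    intro m
    rw [hM₂def, RU_val, mul_RU_apply, hw₂z, mul_zero, add_zero]
  -- step 3: clear column z
  set v₃ : ι → R := fun m => if m = z then 0 else -(M₂ m z * (1 + x)) with hv₃def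
  have hv₃z : v₃ z = 0 := if_pos rfl
  set M₃ : Matrix ι ι R := (LU z v₃ hv₃z).val * M₂ with hM₃def
  have d1 : M₃ z z = 1 - x := by
    rw [hM₃def, LU_val, LU_mul_apply, hv₃z, zero_mul, add_zero, c2]
  have d2 : ∀ k, k ≠ z → M₃ z k = 0 := by
    intro k hk
    rw [hM₃def, LU_val, LU_mul_apply, hv₃z, zero_mul, add_zero, c3 k hk]
  have d3 : ∀ m, m ≠ z → M₃ m z = 0 := by
    intro m hm
    rw [hM₃def, LU_val, LU_mul_apply, c2]
    simp only [hv₃def, if_neg hm]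
    rw [neg_mul, mul_assoc, hu', mul_one, add_neg_cancel]
  -- step 4: rescale row z by (1+x)
  set D : (Matrix ι ι R)ˣ :=
    tU z w (Ne.symm hw) e * tU w z hw b * tU z w (Ne.symm hw) (-e) * tU w z hw (-b) with hDdef
  have hDval : D.val = 1 + Matrix.single z z x := by
    rw [hDdef, hxdef]
    exact dU_val z w (Ne.symm hw) e b hbe
  have hDmem : D ∈ ElementarySubgroup ι R := by
    rw [hDdef]
    exact mul_mem (mul_mem (mul_mem (tU_mem _ _ _ _) (tU_mem _ _ _ _)) (tU_mem _ _ _ _))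
      (tU_mem _ _ _ _)
  have hD_apply : ∀ i j, (D.val * M₃) i j = M₃ i j + if i = z then x * M₃ z j else 0 := by
    intro i j
    rw [hDval, Matrix.add_mul, Matrix.one_mul, Matrix.add_apply]
    congr 1
    by_cases hi : i = z
    · subst hi
      rw [Matrix.single_mul_apply_same, if_pos rfl]
    · rw [if_neg hi, Matrix.mul_apply]
      apply Finset.sum_eq_zero
      intro k _
      simp [Matrix.single_apply_of_row_ne (Ne.symm hi)]
  refine ⟨D * LU z v₃ hv₃z, LU z v₁ hv₁z * RU z w₂ hw₂z,
    mul_mem hDmem (LU_mem _ _ _), mul_mem (LU_mem _ _ _) (RU_mem _ _ _), ?_, ?_, ?_⟩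
  all_goals
    have hprod : ((D * LU z v₃ hv₃z).val * M.val * (LU z v₁ hv₁z * RU z w₂ hw₂z).val)
        = D.val * M₃ := by
      rw [hM₃def, hM₂def, hM₁def]
      simp only [Units.val_mul]
      noncomm_ring
  · rw [hprod, hD_apply, if_pos rfl, d1]
    have hfin : (1 - x) + x * (1 - x) = (1 + x) * (1 - x) := by noncomm_ring
    rw [hfin, hu']
  · intro j hj
    rw [hprod, hD_apply, if_pos rfl, d2 j hj, mul_zero, add_zero]
  · intro i hi
    rw [hprod, hD_apply, if_neg hi, d3 i hi, add_zero]

end ElemAux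

theorem stmt2 (R : Type u) [Ring R] (n : ℕ) (hn : 0 < n)
    (A : (Matrix (Fin n) (Fin n) R)ˣ) (hA : ∃ i j, IsIdempotentElem (A.val i j)) :
    ∃ E F : (Matrix (Fin n) (Fin n) R)ˣ,
      E ∈ ElementarySubgroup (Fin n) R ∧ F ∈ ElementarySubgroup (Fin n) R ∧
      (E.val * A.val * F.val) ⟨0, hn⟩ ⟨0, hn⟩ = 1 ∧
      (∀ j : Fin n, j ≠ ⟨0, hn⟩ → (E.val * A.val * F.val) ⟨0, hn⟩ j = 0) ∧
      (∀ i : Fin n, i ≠ ⟨0, hn⟩ → (E.val * A.val * F.val) i ⟨0, hn⟩ = 0) := by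
  classical
  open ElemAux in
  set z : Fin n := ⟨0, hn⟩ with hzdef
  obtain ⟨i, j, hij⟩ := hA
  by_cases hsub : ∀ k : Fin n, k = z
  · -- essentially the 1×1 case: the ring of matrices is "one-dimensional"
    have hi : i = z := hsub i
    have hj : j = z := hsub j
    rw [hi, hj] at hij
    have hMB : ∑ k, A.val z k * (A⁻¹).val k z = 1 := by
      have h := A.mul_inv
      have h2 := congrFun (congrFun h z) z
      rwa [Matrix.mul_apply, Matrix.one_apply_eq] at h2
    have hsingle : A.val z z * (A⁻¹).val z z = 1 := by
      rw [← hMB]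
      rw [Finset.sum_eq_single z]
      · intro k _ hk; exact absurd (hsub k) hk
      · intro h; exact absurd (Finset.mem_univ z) h
    have hone : A.val z z = 1 := by
      have := hij
      calc A.val z z = A.val z z * (A.val z z * (A⁻¹).val z z) := by rw [hsingle, mul_one]
        _ = (A.val z z * A.val z z) * (A⁻¹).val z z := by rw [mul_assoc]
        _ = A.val z z * (A⁻¹).val z z := by rw [hij]
        _ = 1 := hsingle
    refine ⟨1, 1, one_mem _, one_mem _, ?_, ?_, ?_⟩
    · simp [hone]
    · intro j' hj'; exact absurd (hsub j') hj'
    · intro i' hi'; exact absurd (hsub i') hi'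
  · push_neg at hsub
    obtain ⟨w, hw⟩ := hsub
    -- move the idempotent entry to position (z,z)
    set P : (Matrix (Fin n) (Fin n) R)ˣ :=
      if h : i = z then 1 else swapU z i (fun hzi => h hzi.symm) with hPdef
    have hPmem : P ∈ ElementarySubgroup (Fin n) R := by
      rw [hPdef]; split_ifs
      · exact one_mem _
      · exact swapU_mem _ _ _
    have hP : ∀ k, (P.val * A.val) z k = A.val i k := by
      intro k
      by_cases h : i = z
      · rw [hPdef, dif_pos h, Units.val_one, Matrix.one_mul, h]
      · rw [hPdef, dif_neg h, swapU_val]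
        simp only [Matrix.add_mul, Matrix.one_mul, Matrix.add_apply]
        rw [Matrix.single_mul_apply_same]
        rw [Matrix.single_mul_apply_same]
        have hzi : z ≠ i := fun hzi => h hzi.symm
        rw [show (Matrix.single i z (-1 : R) * A.val) z k = 0 by
          rw [Matrix.mul_apply]; apply Finset.sum_eq_zero; intro m _
          simp [Matrix.single_apply_of_row_ne h]]
        rw [show (Matrix.single i i (-1 : R) * A.val) z k = 0 by
          rw [Matrix.mul_apply]; apply Finset.sum_eq_zero; intro m _
          simp [Matrix.single_apply_of_row_ne h]]
        rw [one_mul, neg_one_mul]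
        abel
    set Q : (Matrix (Fin n) (Fin n) R)ˣ :=
      if h : j = z then 1 else swapU j z h with hQdef
    have hQmem : Q ∈ ElementarySubgroup (Fin n) R := by
      rw [hQdef]; split_ifs
      · exact one_mem _
      · exact swapU_mem _ _ _
    have hQ : ∀ (N : Matrix (Fin n) (Fin n) R) (m : Fin n), (N * Q.val) m z = N m j := by
      intro N m
      by_cases h : j = z
      · rw [hQdef, dif_pos h, Units.val_one, Matrix.mul_one, h]
      · rw [hQdef, dif_neg h, swapU_val]
        simp only [Matrix.mul_add, Matrix.mul_one, Matrix.add_apply]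
        rw [Matrix.mul_single_apply_same]
        rw [Matrix.mul_single_apply_same]
        have hzj : z ≠ j := fun hzj => h hzj.symm
        rw [show (N * Matrix.single z j (-1 : R)) m z = 0 by
          rw [Matrix.mul_apply]; apply Finset.sum_eq_zero; intro l _
          simp [Matrix.single_apply_of_col_ne _ _ h]]
        rw [show (N * Matrix.single j j (-1 : R)) m z = 0 by
          rw [Matrix.mul_apply]; apply Finset.sum_eq_zero; intro l _
          simp [Matrix.single_apply_of_col_ne _ _ h]]
        rw [mul_one, mul_neg_one]
        abel
    set Mu : (Matrix (Fin n) (Fin n) R)ˣ := P * A * Q with hMudef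
    have hMuval : Mu.val = P.val * A.val * Q.val := by
      rw [hMudef]; simp [Units.val_mul]
    have hMuzz : Mu.val z z = A.val i j := by
      rw [hMuval, hQ (P.val * A.val) z, hP j]
    have heM : IsIdempotentElem (Mu.val z z) := by rw [hMuzz]; exact hij
    obtain ⟨E₀, F₀, hE₀, hF₀, g1, g2, g3⟩ := key z w hw Mu heM
    refine ⟨E₀ * P, Q * F₀, mul_mem hE₀ hPmem, mul_mem hQmem hF₀, ?_, ?_, ?_⟩
    all_goals
      have hprod : (E₀ * P).val * A.val * (Q * F₀).val = E₀.val * Mu.val * F₀.val := by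
        rw [hMuval]
        simp only [Units.val_mul]
        noncomm_ring
    · rw [hprod]; exact g1
    · intro j' hj'; rw [hprod]; exact g2 j' hj'
    · intro i' hi'; rw [hprod]; exact g3 i' hi'
end

section
/- Let R be an exchange ring and let α = (a_1, a_2, …, a_n) be a right unimodular row over R. Then there exists a matrix E ∈ E_n(R) such that the row (b_1, b_2, …, b_n) = αE satisfies: R = b_1R ⊕ ⋯ ⊕ b_nR (an internal direct sum of right ideals) and b_i ∈ a_iRa_i for all i. -/
universe u

namespace StmtAux


open Matrix in
lemma unit_aux {R : Type u} [Ring R] {n : ℕ} {i j : Fin n} (hij : i ≠ j) (r : R) :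
    (1 + single i j r) * (1 + single i j (-r)) = 1 := by
  have hsq : single i j r * single i j (-r) = 0 :=
    single_mul_single_of_ne (c := r) (h := hij.symm) (d := -r) ..
  rw [mul_add, add_mul, add_mul, hsq]
  simp only [mul_one, one_mul, add_zero, add_assoc, ← Matrix.single_add,
    add_neg_cancel, Matrix.single_zero]

variable {R : Type u} [Ring R] {n : ℕ}

/-- Reachability by elementary column operations. -/
def Reach (a b : Fin n → R) : Prop :=
  ∃ E ∈ ElementarySubgroup (Fin n) R, Matrix.vecMul a E.val = b

lemma reach_refl (a : Fin n → R) : Reach a a :=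
  ⟨1, one_mem _, by simp [Matrix.vecMul_one]⟩

lemma reach_trans {a b c : Fin n → R} (h1 : Reach a b) (h2 : Reach b c) : Reach a c := by
  obtain ⟨E, hE, hEa⟩ := h1
  obtain ⟨F, hF, hFb⟩ := h2
  exact ⟨E * F, mul_mem hE hF, by rw [Units.val_mul, ← Matrix.vecMul_vecMul, hEa, hFb]⟩

open Matrix in
lemma reach_step (v : Fin n → R) {i j : Fin n} (hij : i ≠ j) (r : R) :
    Reach v (Function.update v j (v j + v i * r)) := by
  refine ⟨⟨1 + single i j r, 1 + single i j (-r), unit_aux hij r, ?_⟩,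
    Subgroup.subset_closure ⟨i, j, r, hij, rfl⟩, ?_⟩
  · have := unit_aux hij (-r)
    rwa [neg_neg] at this
  · funext k
    rw [Matrix.vecMul_add, Matrix.vecMul_one]
    simp only [Pi.add_apply, Matrix.vecMul, dotProduct, Matrix.single, Matrix.of_apply]
    by_cases hk : k = j
    · subst hk
      rw [Function.update_self]
      congr 1
      simp [Finset.sum_ite_eq]
    · rw [Function.update_of_ne hk]
      have hjk : j ≠ k := fun h' => hk h'.symm
      simp [hjk]

lemma reach_multi (v : Fin n → R) (k : Fin n) (r : Fin n → R) (s : Finset (Fin n)) :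
    k ∉ s → Reach v (Function.update v k (v k + ∑ j ∈ s, v j * r j)) := by
  classical
  induction s using Finset.induction_on with
  | empty =>
    intro _
    simpa [Function.update_eq_self] using reach_refl v
  | @insert j₀ s hins ih =>
    intro hk
    have hkj : k ≠ j₀ := fun h => hk (h ▸ Finset.mem_insert_self j₀ s)
    have hks : k ∉ s := fun h => hk (Finset.mem_insert_of_mem h)
    refine reach_trans (ih hks) ?_
    set w := Function.update v k (v k + ∑ j ∈ s, v j * r j) with hw
    have hstep := reach_step w (Ne.symm hkj) (r j₀)
    have heq : Function.update w k (w k + w j₀ * r j₀) =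
        Function.update v k (v k + ∑ j ∈ insert j₀ s, v j * r j) := by
      rw [hw, Function.update_idem]
      refine congrArg (Function.update v k) ?_
      rw [Function.update_self, Function.update_of_ne (Ne.symm hkj), Finset.sum_insert hins]
      abel
    rwa [heq] at hstep



variable {R : Type u} [Ring R]

/-- Nicholson's orthogonal idempotent decomposition, relative to an idempotent `f`. -/
lemma nicholson (hR : IsExchangeRing R) :
    ∀ (n : ℕ) (f : R), IsIdempotentElem f → ∀ c : Fin n → R,
      (∀ i, f * c i = c i) → (∀ i, c i * f = c i) → (∑ i, c i = f) →
      ∃ e w : Fin n → R, (∀ i, IsIdempotentElem (e i)) ∧ (∀ i, e i = c i * w i) ∧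
        (∀ i, f * e i = e i) ∧ (∀ i, e i * f = e i) ∧
        (∀ i j, i ≠ j → e i * e j = 0) ∧ ∑ i, e i = f := by
  intro n
  induction n with
  | zero =>
    intro f hf c hl hr hs
    refine ⟨0, 0, fun i => i.elim0, fun i => i.elim0, fun i => i.elim0, fun i => i.elim0,
      fun i => i.elim0, ?_⟩
    simpa using hs
  | succ n ih =>
    intro f hf c hl hr hs
    obtain ⟨ε, r, s, hε, hεr, hεs⟩ := hR (c 0)
    have hfε : f * ε = ε := by rw [hεr, ← mul_assoc, hl 0]
    set g : R := ε * f with hg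
    have hgg : g * g = g := by
      rw [hg]
      calc ε * f * (ε * f) = ε * (f * ε) * f := by noncomm_ring
        _ = ε * ε * f := by rw [hfε]
        _ = ε * f := by rw [hε.eq]
    have hfg : f * g = g := by rw [hg, ← mul_assoc, hfε]
    have hgf : g * f = g := by rw [hg, mul_assoc, hf.eq]
    set f' : R := f - g with hf'def
    have hff' : f * f' = f' := by rw [hf'def, mul_sub, hf.eq, hfg]
    have hf'f : f' * f = f' := by rw [hf'def, sub_mul, hf.eq, hgf]
    have hf'2 : IsIdempotentElem f' := by
      show f' * f' = f'
      rw [hf'def, sub_mul, mul_sub, mul_sub, hf.eq, hfg, hgf, hgg]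
      abel
    have hgf' : g * f' = 0 := by rw [hf'def, mul_sub, hgf, hgg, sub_self]
    have hf'g : f' * g = 0 := by rw [hf'def, sub_mul, hfg, hgg, sub_self]
    set t : R := s * f with ht
    have hkey : (f - c 0) * t = f' := by
      have h1 : (1 - c 0) * s = 1 - ε := hεs.symm
      rw [ht]
      calc (f - c 0) * (s * f) = (f * (1 - c 0)) * (s * f) := by
            rw [mul_sub, mul_one, hl 0]
        _ = f * ((1 - c 0) * s) * f := by noncomm_ring
        _ = f * (1 - ε) * f := by rw [h1]
        _ = f - ε * f := by rw [mul_sub, mul_one, hfε, sub_mul, hf.eq]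
        _ = f' := by rw [hf'def, hg]
    set c' : Fin n → R := fun i => f' * (c i.succ * (t * f')) with hc'def
    have hl' : ∀ i, f' * c' i = c' i := by
      intro i
      simp only [hc'def]
      rw [← mul_assoc, hf'2.eq]
    have hr' : ∀ i, c' i * f' = c' i := by
      intro i
      simp only [hc'def]
      calc f' * (c i.succ * (t * f')) * f' = f' * (c i.succ * (t * (f' * f'))) := by noncomm_ring
        _ = f' * (c i.succ * (t * f')) := by rw [hf'2.eq]
    have hsum0 : ∑ i : Fin n, c i.succ = f - c 0 := by
      have h := hs
      rw [Fin.sum_univ_succ] at h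
      exact eq_sub_of_add_eq' h
    have hs' : ∑ i, c' i = f' := by
      simp only [hc'def]
      rw [← Finset.mul_sum, ← Finset.sum_mul, hsum0]
      calc f' * ((f - c 0) * (t * f')) = f' * (((f - c 0) * t) * f') := by noncomm_ring
        _ = f' := by rw [hkey, hf'2.eq, hf'2.eq]
    obtain ⟨e', w', he'idem, he'w, hf'e', he'f', he'orth, he'sum⟩ := ih f' hf'2 c' hl' hr' hs'
    set x : Fin n → R := fun i => c i.succ * (t * f') * w' i with hxdef
    have he'x : ∀ i, f' * x i = e' i := by
      intro i
      simp only [hxdef]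
      rw [← mul_assoc]
      exact (he'w i).symm
    have hge' : ∀ i, g * e' i = 0 := fun i => by
      rw [← he'x i, ← mul_assoc, hgf', zero_mul]
    have he'g : ∀ i, e' i * g = 0 := fun i => by
      rw [← he'f' i, mul_assoc, hf'g, mul_zero]
    have he'ff : ∀ i, e' i * f = e' i := fun i => by
      conv_lhs => rw [← he'f' i]
      rw [mul_assoc, hf'f, he'f' i]
    have hfe'' : ∀ i, f * e' i = e' i := fun i => by
      conv_lhs => rw [← hf'e' i]
      rw [← mul_assoc, hff', hf'e' i]
    have hfx : ∀ i, f * x i = x i := fun i => by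
      simp only [hxdef]
      calc f * (c i.succ * (t * f') * w' i) = (f * c i.succ) * (t * f') * w' i := by noncomm_ring
        _ = c i.succ * (t * f') * w' i := by rw [hl i.succ]
    obtain ⟨N, hNdef⟩ : ∃ N : R, N = ∑ i, g * (x i * e' i) := ⟨_, rfl⟩
    have hgN : g * N = N := by
      rw [hNdef, Finset.mul_sum]
      refine Finset.sum_congr rfl fun i _ => ?_
      rw [← mul_assoc, hgg]
    have he'N : ∀ j, e' j * N = 0 := fun j => by
      rw [hNdef, Finset.mul_sum]
      refine Finset.sum_eq_zero fun i _ => ?_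
      rw [← mul_assoc, he'g, zero_mul]
    have hNg : N * g = 0 := by
      rw [hNdef, Finset.sum_mul]
      refine Finset.sum_eq_zero fun i _ => ?_
      calc g * (x i * e' i) * g = g * (x i * (e' i * g)) := by noncomm_ring
        _ = 0 := by rw [he'g, mul_zero, mul_zero]
    have hNN : N * N = 0 := by
      have h2 : ∀ i, g * (x i * e' i) * N = 0 := fun i => by
        calc g * (x i * e' i) * N = g * (x i * (e' i * N)) := by noncomm_ring
          _ = 0 := by rw [he'N, mul_zero, mul_zero]
      calc N * N = ∑ i, g * (x i * e' i) * N := by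
            nth_rewrite 1 [hNdef]
            exact Finset.sum_mul _ _ _
        _ = 0 := Finset.sum_eq_zero fun i _ => h2 i
    have hfN : f * N = N := by
      rw [hNdef, Finset.mul_sum]
      refine Finset.sum_congr rfl fun i _ => ?_
      rw [← mul_assoc, hfg]
    have hNf : N * f = N := by
      have h2 : ∀ i, g * (x i * e' i) * f = g * (x i * e' i) := fun i => by
        calc g * (x i * e' i) * f = g * (x i * (e' i * f)) := by noncomm_ring
          _ = g * (x i * e' i) := by rw [he'ff]
      calc N * f = ∑ i, g * (x i * e' i) * f := by
            nth_rewrite 1 [hNdef]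
            exact Finset.sum_mul _ _ _
        _ = ∑ i, g * (x i * e' i) := Finset.sum_congr rfl fun i _ => h2 i
        _ = N := hNdef.symm
    have hexe : ∀ i j, e' i * (x j * e' j) = e' i * e' j := fun i j => by
      conv_lhs => rw [← he'f' i]
      calc (e' i * f') * (x j * e' j) = e' i * ((f' * x j) * e' j) := by noncomm_ring
        _ = e' i * (e' j * e' j) := by rw [he'x]
        _ = e' i * e' j := by rw [(he'idem j).eq]
    have hNxe : ∀ j, N * (x j * e' j) = g * (x j * e' j) := fun j => by
      calc N * (x j * e' j) = ∑ i, g * (x i * e' i) * (x j * e' j) := by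
            rw [hNdef, Finset.sum_mul]
        _ = ∑ i, g * (x i * (e' i * e' j)) := by
            refine Finset.sum_congr rfl fun i _ => ?_
            calc g * (x i * e' i) * (x j * e' j)
                = g * (x i * (e' i * (x j * e' j))) := by noncomm_ring
              _ = g * (x i * (e' i * e' j)) := by rw [hexe]
        _ = g * (x j * e' j) := by
            rw [Finset.sum_eq_single j]
            · rw [(he'idem j).eq]
            · intro i _ hij
              rw [he'orth i j hij, mul_zero, mul_zero]
            · intro hj
              exact absurd (Finset.mem_univ j) hj
    have hgplus : g + f' = f := by rw [hf'def]; abel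
    refine ⟨Fin.cons (g - N) (fun i => x i * e' i),
      Fin.cons (r * f * (1 - N)) (fun i => t * f' * w' i * e' i), ?_, ?_, ?_, ?_, ?_, ?_⟩
    · intro i
      induction i using Fin.cases with
      | zero =>
        show (g - N) * (g - N) = g - N
        rw [sub_mul, mul_sub, mul_sub, hgg, hgN, hNg, hNN]
        abel
      | succ i =>
        show (x i * e' i) * (x i * e' i) = x i * e' i
        rw [mul_assoc, hexe, (he'idem i).eq]
    · intro i
      induction i using Fin.cases with
      | zero =>
        simp only [Fin.cons_zero]
        calc g - N = g * (1 - N) := by rw [mul_sub, mul_one, hgN]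
          _ = ((c 0 * r) * f) * (1 - N) := by rw [← hεr, ← hg]
          _ = c 0 * (r * f * (1 - N)) := by noncomm_ring
      | succ i =>
        simp only [Fin.cons_succ, hxdef]
        noncomm_ring
    · intro i
      induction i using Fin.cases with
      | zero =>
        simp only [Fin.cons_zero]
        rw [mul_sub, hfg, hfN]
      | succ i =>
        simp only [Fin.cons_succ]
        rw [← mul_assoc, hfx]
    · intro i
      induction i using Fin.cases with
      | zero =>
        simp only [Fin.cons_zero]
        rw [sub_mul, hgf, hNf]
      | succ i =>
        simp only [Fin.cons_succ]
        rw [mul_assoc, he'ff]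
    · intro i j hij
      induction i using Fin.cases with
      | zero =>
        induction j using Fin.cases with
        | zero => exact absurd rfl hij
        | succ j =>
          simp only [Fin.cons_zero, Fin.cons_succ]
          rw [sub_mul, hNxe j, sub_self]
      | succ i =>
        induction j using Fin.cases with
        | zero =>
          simp only [Fin.cons_zero, Fin.cons_succ]
          have h1 : x i * e' i * g = 0 := by rw [mul_assoc, he'g, mul_zero]
          have h2 : x i * e' i * N = 0 := by rw [mul_assoc, he'N, mul_zero]
          rw [mul_sub, h1, h2, sub_self]
        | succ j =>
          have hij' : i ≠ j := fun h => hij (by rw [h])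
          simp only [Fin.cons_succ]
          rw [mul_assoc, hexe, he'orth i j hij', mul_zero]
    · rw [Fin.sum_cons]
      have hterm : ∀ i, x i * e' i = g * (x i * e' i) + e' i := fun i => by
        conv_lhs => rw [← hfx i]
        rw [← hgplus, add_mul, add_mul, he'x i, (he'idem i).eq, mul_assoc]
      calc (g - N) + ∑ i, x i * e' i
          = (g - N) + ∑ i, (g * (x i * e' i) + e' i) := by
            refine congrArg _ (Finset.sum_congr rfl fun i _ => hterm i)
        _ = (g - N) + (N + f') := by rw [Finset.sum_add_distrib, ← hNdef, he'sum]
        _ = f := by rw [hf'def]; abel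


end StmtAux

open StmtAux MulOpposite in
/-- The transformed row is `b = α · E` (`Matrix.vecMul`); the internal
direct sum `R = b₁R ⊕ ⋯ ⊕ bₙR` of right ideals is expressed by independence plus
supremum `⊤` of the right ideals `bᵢR = Submodule.span Rᵐᵒᵖ {bᵢ}`. -/
theorem stmt3 (R : Type u) [Ring R] (hR : IsExchangeRing R) (n : ℕ)
    (a : Fin n → R) (ha : ∃ r : Fin n → R, ∑ i, a i * r i = 1) :
    ∃ E ∈ ElementarySubgroup (Fin n) R, ∃ b : Fin n → R,
      b = Matrix.vecMul a E.val ∧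
      (∀ i, ∃ r : R, b i = a i * r * a i) ∧
      iSupIndep (fun i => Submodule.span Rᵐᵒᵖ ({b i} : Set R)) ∧
      (⨆ i, Submodule.span Rᵐᵒᵖ ({b i} : Set R)) = ⊤ := by
  obtain ⟨r, hr⟩ := ha
  obtain ⟨e, w, heidem, hew, -, -, horth, hesum⟩ :=
    nicholson hR n 1 (by simp [IsIdempotentElem]) (fun i => a i * r i)
      (fun i => one_mul _) (fun i => mul_one _) hr
  set t : Fin n → R := fun i => r i * w i with htdef
  have het : ∀ i, a i * t i = e i := fun i => by
    simp only [htdef]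
    rw [← mul_assoc, ← hew i]
  set b : Fin n → R := fun i => e i * a i with hbdef
  have hbt : ∀ i, b i * t i = e i := fun i => by
    simp only [hbdef]
    rw [mul_assoc, het i, (heidem i).eq]
  -- Reach a b
  have key : ∀ m : ℕ, m ≤ n → Reach a (fun i => if (i : ℕ) < m then b i else a i) := by
    intro m
    induction m with
    | zero =>
      intro _
      have h0 : (fun i : Fin n => if (i : ℕ) < 0 then b i else a i) = a := by
        funext i; simp
      rw [h0]
      exact reach_refl a
    | succ m ih =>
      intro hm1
      have hm : m < n := hm1
      set k : Fin n := ⟨m, hm⟩ with hkdef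
      set v : Fin n → R := fun i => if (i : ℕ) < m then b i else a i with hvdef
      refine reach_trans (ih (Nat.le_of_lt hm)) ?_
      have hstep := reach_multi v k (fun j => -(t j * a k)) (Finset.univ.erase k)
        (Finset.notMem_erase k Finset.univ)
      beta_reduce at hstep
      have hvt : ∀ j, v j * t j = e j := by
        intro j
        simp only [hvdef]
        by_cases h : (j : ℕ) < m
        · rw [if_pos h]; exact hbt j
        · rw [if_neg h]; exact het j
      have hsum2 : ∑ j ∈ Finset.univ.erase k, v j * -(t j * a k) = -((1 - e k) * a k) := by
        have h1 : ∀ j, v j * -(t j * a k) = -(e j * a k) := fun j => by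
          rw [mul_neg, ← mul_assoc, hvt j]
        rw [Finset.sum_congr rfl fun j _ => h1 j]
        have h3 := Finset.add_sum_erase Finset.univ e (Finset.mem_univ k)
        rw [hesum] at h3
        rw [Finset.sum_neg_distrib, ← Finset.sum_mul, eq_sub_of_add_eq' h3]
      have hvk : v k = a k := by
        simp only [hvdef]
        rw [if_neg (lt_irrefl m)]
      have hval : v k + ∑ j ∈ Finset.univ.erase k, v j * -(t j * a k) = b k := by
        rw [hvk, hsum2]
        show a k + -((1 - e k) * a k) = e k * a k
        rw [sub_mul, one_mul]
        abel
      have hupd : Function.update v k (v k + ∑ j ∈ Finset.univ.erase k, v j * -(t j * a k)) =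
          fun i : Fin n => if (i : ℕ) < m + 1 then b i else a i := by
        rw [hval]
        funext i
        by_cases hik : i = k
        · subst hik
          rw [Function.update_self, if_pos (Nat.lt_succ_self m)]
        · rw [Function.update_of_ne hik]
          have him : (i : ℕ) ≠ m := fun h => hik (Fin.ext h)
          simp only [hvdef]
          by_cases h2 : (i : ℕ) < m
          · rw [if_pos h2, if_pos (by omega)]
          · rw [if_neg h2, if_neg (by omega)]
      rwa [hupd] at hstep
  have hfin : (fun i : Fin n => if (i : ℕ) < n then b i else a i) = b := by
    funext i
    rw [if_pos i.isLt]
  obtain ⟨E, hE, hEa⟩ := key n le_rfl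
  rw [hfin] at hEa
  -- span equalities
  have hspan : ∀ i, Submodule.span Rᵐᵒᵖ ({b i} : Set R) = Submodule.span Rᵐᵒᵖ ({e i} : Set R) := by
    intro i
    apply le_antisymm
    · rw [Submodule.span_singleton_le_iff_mem, Submodule.mem_span_singleton]
      exact ⟨op (a i), rfl⟩
    · rw [Submodule.span_singleton_le_iff_mem, Submodule.mem_span_singleton]
      exact ⟨op (t i), hbt i⟩
  have h1mem : (1 : R) ∈ ⨆ i, Submodule.span Rᵐᵒᵖ ({b i} : Set R) := by
    rw [← hesum]
    refine Submodule.sum_mem _ fun i _ => ?_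
    refine Submodule.mem_iSup_of_mem i ?_
    rw [hspan i]
    exact Submodule.mem_span_singleton_self _
  refine ⟨E, hE, b, hEa.symm, fun i => ⟨t i, by rw [het i]⟩, ?_, ?_⟩
  · -- independence
    intro i
    rw [Submodule.disjoint_def]
    intro y hyi hyrest
    set L : R →ₗ[Rᵐᵒᵖ] R :=
      { toFun := fun z => e i * z
        map_add' := fun z1 z2 => mul_add _ _ _
        map_smul' := fun m z => (mul_assoc (e i) z m.unop).symm } with hLdef
    have hker : (⨆ j, ⨆ (_ : j ≠ i), Submodule.span Rᵐᵒᵖ ({b j} : Set R)) ≤ LinearMap.ker L := by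
      refine iSup₂_le fun j hj => ?_
      rw [Submodule.span_singleton_le_iff_mem, LinearMap.mem_ker]
      show e i * b j = 0
      show e i * (e j * a j) = 0
      rw [← mul_assoc, horth i j (Ne.symm hj), zero_mul]
    have hy0 : L y = 0 := hker hyrest
    have hy1 : L y = y := by
      rw [Submodule.mem_span_singleton] at hyi
      obtain ⟨m, hm⟩ := hyi
      show e i * y = y
      rw [← hm]
      show e i * (b i * m.unop) = b i * m.unop
      rw [← mul_assoc]
      have hib : e i * b i = b i := by
        show e i * (e i * a i) = e i * a i
        rw [← mul_assoc, (heidem i).eq]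
      rw [hib]
    rw [← hy1, hy0]
  · -- iSup = ⊤
    apply Submodule.eq_top_iff'.mpr
    intro y
    have := Submodule.smul_mem _ (op y) h1mem
    simpa using this
end

section
/- Let R be an exchange ring and let α = (a_1, a_2, …, a_n) be a right unimodular row over R, with n ≥ 2. Then there exists a matrix E ∈ E_n(R) such that the row (b_1, b_2, …, b_n) = αE satisfies Rb_1R = R and b_i ∈ a_iRa_i for all i ≥ 2. -/
universe u

section Aux

variable {R : Type u} [Ring R]


lemma cornerExchange (hR : IsExchangeRing R) (f α : R)
    (hf : IsIdempotentElem f) (h1 : f * α = α) (h2 : α * f = α) :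
    ∃ η p q : R, IsIdempotentElem η ∧ f * η = η ∧ η * f = η ∧
      f - η = α * p ∧ η = (f - α) * q := by
  obtain ⟨e, u, v, he, heu, hev⟩ := hR (α + 1 - f)
  have hfa : (1 : R) - (α + 1 - f) = f - α := by abel
  rw [hfa] at hev
  have hhidem : (1 - e) * (1 - e) = 1 - e := he.one_sub.eq
  have hfh : f * (1 - e) = 1 - e := by
    rw [hev, ← mul_assoc, mul_sub, hf.eq, h1]
  have hfη : f * ((1 - e) * f) = (1 - e) * f := by
    rw [← mul_assoc, hfh]
  have hηf : ((1 - e) * f) * f = (1 - e) * f := by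
    rw [mul_assoc, hf.eq]
  have hsub : f - (1 - e) * f = e * f := by
    rw [sub_mul, one_mul]; abel
  have hfef : f * (e * f) = e * f := by
    have : f * (f - (1 - e) * f) = f - (1 - e) * f := by
      rw [mul_sub, hf.eq, hfη]
    rwa [hsub] at this
  have hfe : f * e = α * u := by
    rw [heu, ← mul_assoc]
    have : f * (α + 1 - f) = α := by
      rw [mul_sub, mul_add, h1, mul_one, hf.eq]; abel
    rw [this]
  refine ⟨(1 - e) * f, u * f, v * f, ?_, hfη, hηf, ?_, ?_⟩
  · show (1 - e) * f * ((1 - e) * f) = (1 - e) * f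
    calc (1 - e) * f * ((1 - e) * f) = (1 - e) * (f * ((1 - e) * f)) := by rw [mul_assoc]
    _ = (1 - e) * ((1 - e) * f) := by rw [hfη]
    _ = ((1 - e) * (1 - e)) * f := by rw [mul_assoc]
    _ = (1 - e) * f := by rw [hhidem]
  · rw [hsub, ← hfef, ← mul_assoc, hfe, mul_assoc]
  · rw [hev, mul_assoc]

lemma nicholson (hR : IsExchangeRing R) :
    ∀ (n : ℕ) (f : R), IsIdempotentElem f → ∀ a r : Fin n → R, (∀ i, f * a i = a i) →
      (∑ i, a i * r i) = f →
      ∃ g t : Fin n → R, (∀ i, IsIdempotentElem (g i)) ∧ (∀ i, g i = a i * t i) ∧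
        (∀ i, g i * f = g i) ∧ ∑ i, g i = f := by
  intro n
  induction n with
  | zero =>
    intro f _ a r _ hsum
    refine ⟨fun i => i.elim0, fun i => i.elim0, fun i => i.elim0, fun i => i.elim0,
      fun i => i.elim0, ?_⟩
    simpa using hsum.symm ▸ (by simp : (∑ i : Fin 0, (fun i : Fin 0 => i.elim0 (α := R)) i) = 0)
  | succ n ih =>
    intro f hf a r ha hsum
    set r' : Fin (n + 1) → R := fun i => r i * f with hr'
    have hsum' : (∑ i, a i * r' i) = f := by
      have : (∑ i, a i * r' i) = (∑ i, a i * r i) * f := by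
        rw [Finset.sum_mul]
        exact Finset.sum_congr rfl fun i _ => by rw [mul_assoc]
      rw [this, hsum, hf.eq]
    set α : R := a 0 * r' 0 with hα
    have hαl : f * α = α := by rw [hα, ← mul_assoc, ha 0]
    have hαr : α * f = α := by rw [hα, hr', mul_assoc, mul_assoc, hf.eq]
    obtain ⟨η, p, q, hη, hfη, hηf, hfmη, hηeq⟩ := cornerExchange hR f α hf hαl hαr
    have hrest : (∑ i : Fin n, a i.succ * r' i.succ) = f - α := by
      rw [Fin.sum_univ_succ] at hsum'
      rw [eq_sub_iff_add_eq, add_comm]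
      exact hsum'
    have hrec : (∑ i : Fin n, (η * a i.succ) * (r' i.succ * (q * η))) = η := by
      have : (∑ i : Fin n, (η * a i.succ) * (r' i.succ * (q * η)))
          = η * ((∑ i : Fin n, a i.succ * r' i.succ) * (q * η)) := by
        rw [Finset.sum_mul, Finset.mul_sum]
        exact Finset.sum_congr rfl fun i _ => by noncomm_ring
      rw [this, hrest, ← mul_assoc (f - α) q η, ← hηeq, ← mul_assoc, hη.eq]
      exact hη.eq
    obtain ⟨g', t', hg'idem, hg'eq, hg'η, hg'sum⟩ := ih η hη
      (fun i => η * a i.succ) (fun i => r' i.succ * (q * η))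
      (fun i => by rw [← mul_assoc, hη.eq]) hrec
    set e : Fin n → R := fun i => a i.succ * (t' i * g' i) with he
    have hηe : ∀ i, η * e i = g' i := fun i => by
      calc η * (a i.succ * (t' i * g' i)) = ((η * a i.succ) * t' i) * g' i := by noncomm_ring
      _ = g' i * g' i := by rw [← hg'eq]
      _ = g' i := (hg'idem i).eq
    have heη : ∀ i, e i * η = e i := fun i => by
      calc a i.succ * (t' i * g' i) * η = a i.succ * (t' i * (g' i * η)) := by noncomm_ring
      _ = a i.succ * (t' i * g' i) := by rw [hg'η]
    have heidem : ∀ i, IsIdempotentElem (e i) := fun i => by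
      show e i * e i = e i
      calc e i * e i = (e i * η) * e i := by rw [heη]
      _ = e i * (η * e i) := by rw [mul_assoc]
      _ = e i * g' i := by rw [hηe]
      _ = a i.succ * (t' i * (g' i * g' i)) := by rw [he]; noncomm_ring
      _ = e i := by rw [(hg'idem i).eq]
    have hef : ∀ i, e i * f = e i := fun i => by
      calc e i * f = (e i * η) * f := by rw [heη]
      _ = e i * (η * f) := by rw [mul_assoc]
      _ = e i := by rw [hηf, heη]
    set s : R := ∑ i, e i with hs
    have hηs : η * s = η := by
      rw [hs, Finset.mul_sum]
      rw [Finset.sum_congr rfl fun i _ => hηe i]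
      exact hg'sum
    have hsη : s * η = s := by
      rw [hs, Finset.sum_mul]
      exact Finset.sum_congr rfl fun i _ => heη i
    have hsf : s * f = s := by
      rw [hs, Finset.sum_mul]
      exact Finset.sum_congr rfl fun i _ => hef i
    have hfs : f * s = s := by
      rw [hs, Finset.mul_sum]
      refine Finset.sum_congr rfl fun i _ => ?_
      rw [he, ← mul_assoc, ha]
    have hss : s * s = s := by
      calc s * s = (s * η) * s := by rw [hsη]
      _ = s * (η * s) := by rw [mul_assoc]
      _ = s * η := by rw [hηs]
      _ = s := hsη
    have hfsidem : IsIdempotentElem (f - s) := by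
      show (f - s) * (f - s) = f - s
      rw [sub_mul, mul_sub, mul_sub, hf.eq, hfs, hsf, hss]; abel
    have hkey : (f - η) * (1 + η - s) = f - s := by
      rw [sub_mul, mul_sub, mul_sub, mul_add, mul_add, mul_one, mul_one, hfη, hfs,
        hη.eq, hηs]
      abel
    have hfsa : f - s = a 0 * (r' 0 * (p * (1 + η - s))) := by
      rw [← hkey, hfmη, hα]
      noncomm_ring
    have hfsf : (f - s) * f = f - s := by rw [sub_mul, hf.eq, hsf]
    refine ⟨Fin.cons (f - s) e, Fin.cons (r' 0 * (p * (1 + η - s))) (fun i => t' i * g' i),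
      ?_, ?_, ?_, ?_⟩
    · intro i
      refine Fin.cases ?_ ?_ i
      · simpa using hfsidem
      · intro j; simpa using heidem j
    · intro i
      refine Fin.cases ?_ ?_ i
      · simpa using hfsa
      · intro j; simp [he]
    · intro i
      refine Fin.cases ?_ ?_ i
      · simpa using hfsf
      · intro j; simpa using hef j
    · rw [Fin.sum_univ_succ]
      simp only [Fin.cons_zero, Fin.cons_succ]
      rw [← hs, sub_add_cancel]

variable {n : ℕ}

lemma sum_ite_zero' (i : Fin n) (G : Fin n → R) :
    (∑ j, if j = i then 0 else G j) = (∑ j, G j) - G i := by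
  rw [← Finset.add_sum_erase Finset.univ (fun j => if j = i then (0:R) else G j)
      (Finset.mem_univ i),
    ← Finset.add_sum_erase Finset.univ G (Finset.mem_univ i), if_pos rfl,
    Finset.sum_congr rfl (fun j hj => if_neg (Finset.ne_of_mem_erase hj))]
  abel

/-- The row after the first stage of column operations: columns `1..k` have been
replaced by `a j * t j * a j`. -/
def rowFun (a t : Fin n → R) (k : ℕ) : Fin n → R :=
  fun j => if (j : ℕ) ≠ 0 ∧ (j : ℕ) ≤ k then a j * (t j * a j) else a j


def colMat (i : Fin n) (c : Fin n → R) : Matrix (Fin n) (Fin n) R :=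
  1 + ∑ j, Matrix.single j i (c j)

lemma colMat_mul_aux (i : Fin n) (c c' : Fin n → R) (hc' : c' i = 0) :
    (∑ j, Matrix.single j i (c j)) * (∑ j, Matrix.single j i (c' j)) = 0 := by
  rw [Finset.sum_mul_sum]
  refine Finset.sum_eq_zero fun j _ => Finset.sum_eq_zero fun k _ => ?_
  by_cases h : i = k
  · subst h
    rw [Matrix.single_mul_single_same, hc', mul_zero, Matrix.single_zero]
  · exact Matrix.single_mul_single_of_ne (h := h) ..

lemma colMat_sum_add (i : Fin n) (c c' : Fin n → R) :
    (∑ j, Matrix.single j i (c j)) + (∑ j, Matrix.single j i (c' j))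
      = ∑ j, Matrix.single j i (c j + c' j) := by
  rw [← Finset.sum_add_distrib]
  exact Finset.sum_congr rfl fun j _ => (Matrix.single_add _ _ _ _).symm

lemma colMat_mul (i : Fin n) (c c' : Fin n → R) (hc' : c' i = 0) :
    colMat i c * colMat i c' = colMat i (c + c') := by
  unfold colMat
  have h1 : ((1 : Matrix (Fin n) (Fin n) R) + ∑ j, Matrix.single j i (c j)) *
      (1 + ∑ j, Matrix.single j i (c' j)) =
      1 + ((∑ j, Matrix.single j i (c j)) + ∑ j, Matrix.single j i (c' j)) +
      (∑ j, Matrix.single j i (c j)) * (∑ j, Matrix.single j i (c' j)) := by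
    noncomm_ring
  rw [h1, colMat_mul_aux i c c' hc', add_zero, colMat_sum_add]
  rfl

def colUnit (i : Fin n) (c : Fin n → R) (hc : c i = 0) : (Matrix (Fin n) (Fin n) R)ˣ where
  val := colMat i c
  inv := colMat i (-c)
  val_inv := by
    rw [colMat_mul i c (-c) (by simp [hc])]
    simp [colMat]
  inv_val := by
    rw [colMat_mul i (-c) c hc]
    simp [colMat]

lemma colUnit_mem (i : Fin n) (c : Fin n → R) (hc : c i = 0) :
    colUnit i c hc ∈ ElementarySubgroup (Fin n) R := by
  suffices h : ∀ s : Finset (Fin n), ∀ c : Fin n → R, ∀ hc : c i = 0, (∀ j, j ∉ s → c j = 0) →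
      colUnit i c hc ∈ ElementarySubgroup (Fin n) R by
    exact h Finset.univ c hc fun j hj => absurd (Finset.mem_univ j) hj
  intro s
  induction s using Finset.induction_on with
  | empty =>
    intro c hc h0
    have : colUnit i c hc = 1 := by
      apply Units.ext
      show colMat i c = 1
      unfold colMat
      have : ∀ j : Fin n, j ∈ Finset.univ → Matrix.single j i (c j) = 0 := by
        intro j _
        rw [h0 j (by simp), Matrix.single_zero]
      rw [Finset.sum_eq_zero this, add_zero]
    rw [this]
    exact one_mem _
  | @insert j₀ s hj₀ ih =>
    intro c hc hsupp
    by_cases hji : j₀ = i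
    · subst hji
      apply ih c hc
      intro j hj
      by_cases hjj : j = j₀
      · subst hjj; exact hc
      · exact hsupp j (by simp [hj, hjj])
    · set c' : Fin n → R := Function.update c j₀ 0 with hc'def
      have hc' : c' i = 0 := by
        rw [hc'def, Function.update_of_ne (fun h => hji h.symm), hc]
      have hsingle : (Pi.single j₀ (c j₀) : Fin n → R) i = 0 :=
        Pi.single_eq_of_ne (fun h => hji h.symm) _
      have hmem' : colUnit i c' hc' ∈ ElementarySubgroup (Fin n) R := by
        apply ih
        intro j hj
        by_cases hjj : j = j₀
        · subst hjj; rw [hc'def, Function.update_self]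
        · rw [hc'def, Function.update_of_ne hjj]
          exact hsupp j (by simp [hj, hjj])
      have hgen : colUnit i (Pi.single j₀ (c j₀)) hsingle ∈ ElementarySubgroup (Fin n) R := by
        apply Subgroup.subset_closure
        refine ⟨j₀, i, c j₀, hji, ?_⟩
        show colMat i (Pi.single j₀ (c j₀)) = 1 + Matrix.single j₀ i (c j₀)
        unfold colMat
        congr 1
        rw [Finset.sum_eq_single j₀]
        · rw [Pi.single_eq_same]
        · intro j _ hjj
          rw [Pi.single_eq_of_ne hjj, Matrix.single_zero]
        · intro h; exact absurd (Finset.mem_univ j₀) h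
      have hdecomp : colUnit i c hc = colUnit i (Pi.single j₀ (c j₀)) hsingle *
          colUnit i c' hc' := by
        apply Units.ext
        show colMat i c = colMat i (Pi.single j₀ (c j₀)) * colMat i c'
        rw [colMat_mul i _ _ hc']
        have : Pi.single j₀ (c j₀) + c' = c := by
          funext j
          by_cases hjj : j = j₀
          · subst hjj
            simp [hc'def, Pi.single_eq_same]
          · simp [hc'def, Pi.single_eq_of_ne hjj, Function.update_of_ne hjj]
        rw [this]
      rw [hdecomp]
      exact mul_mem hgen hmem'

lemma vecMul_colUnit (a : Fin n → R) (i : Fin n) (c : Fin n → R) (hc : c i = 0) :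
    Matrix.vecMul a (colUnit i c hc).val
      = Function.update a i (a i + ∑ j, a j * c j) := by
  funext k
  show Matrix.vecMul a (colMat i c) k = _
  unfold colMat
  rw [Matrix.vecMul_add, Matrix.vecMul_one]
  have hA : ∀ l : Fin n, (∑ j, Matrix.single j i (c j)) l k
      = if k = i then c l else 0 := by
    intro l
    rw [Matrix.sum_apply]
    rw [Finset.sum_eq_single l]
    · by_cases hk : k = i
      · subst hk; simp [Matrix.single]
      · rw [if_neg hk]
        exact Matrix.single_apply_of_col_ne _ _ (fun h => hk h.symm) _
    · intro j _ hjl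
      exact Matrix.single_apply_of_row_ne hjl _ _ _
    · intro h; exact absurd (Finset.mem_univ l) h
  have hvA : Matrix.vecMul a (∑ j, Matrix.single j i (c j)) k
      = if k = i then ∑ j, a j * c j else 0 := by
    rw [Matrix.vecMul, dotProduct]
    simp only [hA]
    by_cases hk : k = i
    · simp [hk]
    · simp [hk]
  simp only [Pi.add_apply]
  rw [hvA]
  by_cases hk : k = i
  · subst hk; rw [Function.update_self]; simp
  · rw [Function.update_of_ne hk]; simp [hk]

lemma stageA (a t : Fin n → R)
    (hidem : ∀ j, (a j * t j) * (a j * t j) = a j * t j)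
    (hsum1 : (∑ j, a j * t j) = 1) :
    ∀ k : ℕ, k < n → ∃ E ∈ ElementarySubgroup (Fin n) R,
      Matrix.vecMul a E.val = rowFun a t k := by
  intro k
  induction k with
  | zero =>
    intro _
    refine ⟨1, one_mem _, ?_⟩
    rw [Units.val_one, Matrix.vecMul_one]
    funext j
    rw [rowFun, if_neg (by omega)]
  | succ k ihk =>
    intro hk
    obtain ⟨E, hE, hEval⟩ := ihk (by omega)
    set i : Fin n := ⟨k + 1, hk⟩ with hi
    have hival : (i : ℕ) = k + 1 := rfl
    set c : Fin n → R := fun j => if j = i then 0 else -(t j * a i) with hcdef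
    have hc : c i = 0 := if_pos rfl
    refine ⟨E * colUnit i c hc, mul_mem hE (colUnit_mem i c hc), ?_⟩
    rw [Units.val_mul, ← Matrix.vecMul_vecMul, hEval, vecMul_colUnit]
    have hterm : ∀ j, rowFun a t k j * c j
        = if j = i then 0 else -((a j * t j) * a i) := by
      intro j
      by_cases hji : j = i
      · rw [if_pos hji, hcdef]
        simp [hji]
      · rw [if_neg hji, hcdef]
        simp only [if_neg hji]
        rw [mul_neg, neg_inj]
        rw [rowFun]
        by_cases hcond : (j : ℕ) ≠ 0 ∧ (j : ℕ) ≤ k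
        · rw [if_pos hcond]
          calc a j * (t j * a j) * (t j * a i)
              = ((a j * t j) * (a j * t j)) * a i := by noncomm_ring
          _ = (a j * t j) * a i := by rw [hidem j]
        · rw [if_neg hcond, mul_assoc]
    have hsum : (∑ j, rowFun a t k j * c j) = -((1 - a i * t i) * a i) := by
      rw [Finset.sum_congr rfl fun j _ => hterm j,
        sum_ite_zero' i (fun j => -((a j * t j) * a i)), Finset.sum_neg_distrib,
        ← Finset.sum_mul, hsum1]
      noncomm_ring
    rw [hsum]
    funext j
    by_cases hji : j = i
    · subst hji
      rw [Function.update_self]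
      have hL : rowFun a t k i = a i := by
        rw [rowFun, if_neg (by omega)]
      have hRr : rowFun a t (k + 1) i = a i * (t i * a i) := by
        rw [rowFun, if_pos ⟨by omega, by omega⟩]
      rw [hL, hRr]
      noncomm_ring
    · rw [Function.update_of_ne hji]
      have hne : (j : ℕ) ≠ k + 1 := fun h => hji (Fin.ext h)
      rw [rowFun, rowFun]
      by_cases hcond : (j : ℕ) ≠ 0 ∧ (j : ℕ) ≤ k
      · rw [if_pos hcond, if_pos ⟨hcond.1, by omega⟩]
      · rw [if_neg hcond, if_neg (fun h => hcond ⟨h.1, by omega⟩)]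

end Aux

/-- The transformed row is `b = α · E`; `Rb₁R = R` is expressed via
`TwoSidedIdeal.span`. -/
theorem stmt4 (R : Type u) [Ring R] (hR : IsExchangeRing R) (n : ℕ) (hn : 2 ≤ n)
    (a : Fin n → R) (ha : ∃ r : Fin n → R, ∑ i, a i * r i = 1) :
    ∃ E ∈ ElementarySubgroup (Fin n) R, ∃ b : Fin n → R,
      b = Matrix.vecMul a E.val ∧
      TwoSidedIdeal.span ({b ⟨0, by omega⟩} : Set R) = ⊤ ∧
      (∀ i : Fin n, i ≠ ⟨0, by omega⟩ → ∃ r : R, b i = a i * r * a i) := by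
  obtain ⟨r, hr⟩ := ha
  obtain ⟨g, t, hgidem, hgeq, -, hgsum⟩ :=
    nicholson hR n 1 IsIdempotentElem.one a r (fun i => one_mul _) (by simpa using hr)
  have hidem : ∀ j, (a j * t j) * (a j * t j) = a j * t j := fun j => by
    rw [← hgeq j]; exact (hgidem j).eq
  have hsum1 : (∑ j, a j * t j) = 1 := by
    rw [← Finset.sum_congr rfl fun j _ => hgeq j]
    exact hgsum
  obtain ⟨E, hE, hEval⟩ := stageA a t hidem hsum1 (n - 1) (by omega)
  set i0 : Fin n := ⟨0, by omega⟩ with hi0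
  set c : Fin n → R := fun j => if j = i0 then 0 else t j * (1 - a i0) with hcdef
  have hc : c i0 = 0 := if_pos rfl
  have hrow0 : rowFun a t (n - 1) i0 = a i0 := by
    rw [rowFun, if_neg (by simp [hi0])]
  set e0 : R := a i0 * t i0 with he0def
  have hterm : ∀ j, rowFun a t (n - 1) j * c j
      = if j = i0 then 0 else (a j * t j) * (1 - a i0) := by
    intro j
    by_cases hji : j = i0
    · rw [if_pos hji, hcdef]; simp [hji]
    · rw [if_neg hji, hcdef]
      simp only [if_neg hji]
      have hjne : (j : ℕ) ≠ 0 := fun h => hji (Fin.ext h)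
      rw [rowFun, if_pos ⟨hjne, by omega⟩]
      calc a j * (t j * a j) * (t j * (1 - a i0))
          = ((a j * t j) * (a j * t j)) * (1 - a i0) := by noncomm_ring
      _ = (a j * t j) * (1 - a i0) := by rw [hidem j]
  refine ⟨E * colUnit i0 c hc, mul_mem hE (colUnit_mem i0 c hc),
    Matrix.vecMul a (E * colUnit i0 c hc).val, rfl, ?_, ?_⟩
  · -- span of the first entry is ⊤
    have hb0 : Matrix.vecMul a (E * colUnit i0 c hc).val i0
        = a i0 + (1 - e0) * (1 - a i0) := by
      rw [Units.val_mul, ← Matrix.vecMul_vecMul, hEval, vecMul_colUnit,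
        Function.update_self, hrow0]
      rw [Finset.sum_congr rfl fun j _ => hterm j,
        sum_ite_zero' i0 (fun j => (a j * t j) * (1 - a i0)), ← Finset.sum_mul, hsum1,
        he0def]
      noncomm_ring
    apply TwoSidedIdeal.eq_top
    rw [hb0]
    set x : R := a i0 + (1 - e0) * (1 - a i0) with hxdef
    have hx : x ∈ TwoSidedIdeal.span {x} := TwoSidedIdeal.subset_span rfl
    have he0idem : e0 * e0 = e0 := hidem i0
    have he0mem : e0 ∈ TwoSidedIdeal.span {x} := by
      have key : e0 * x * t i0 = e0 := by
        rw [hxdef]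
        calc e0 * (a i0 + (1 - e0) * (1 - a i0)) * t i0
            = (a i0 * t i0) * (a i0 * t i0)
              + (e0 * (1 - e0)) * ((1 - a i0) * t i0) := by rw [he0def]; noncomm_ring
        _ = e0 := by
            rw [hidem i0, mul_sub, mul_one, he0idem, sub_self, zero_mul, add_zero, he0def]
      rw [← key]
      exact TwoSidedIdeal.mul_mem_right _ _ _ (TwoSidedIdeal.mul_mem_left _ _ _ hx)
    have h1me : (1 : R) - e0 ∈ TwoSidedIdeal.span {x} := by
      have h1e : (1 - e0) * (1 - e0) = 1 - e0 := (IsIdempotentElem.one_sub he0idem).eq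
      have key : (1 - e0) * x = 1 - e0 := by
        rw [hxdef]
        calc (1 - e0) * (a i0 + (1 - e0) * (1 - a i0))
            = (1 - e0) * a i0 + ((1 - e0) * (1 - e0)) * (1 - a i0) := by noncomm_ring
        _ = (1 - e0) * a i0 + (1 - e0) * (1 - a i0) := by rw [h1e]
        _ = (1 - e0) * (a i0 + (1 - a i0)) := by rw [mul_add]
        _ = 1 - e0 := by rw [add_sub_cancel, mul_one]
      rw [← key]
      exact TwoSidedIdeal.mul_mem_left _ _ _ hx
    have hsum2 := TwoSidedIdeal.add_mem _ he0mem h1me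
    have : e0 + (1 - e0) = 1 := by abel
    rwa [this] at hsum2
  · intro i hi
    refine ⟨t i, ?_⟩
    rw [Units.val_mul, ← Matrix.vecMul_vecMul, hEval, vecMul_colUnit,
      Function.update_of_ne hi, rowFun]
    have hjne : (i : ℕ) ≠ 0 := fun h => hi (Fin.ext h)
    rw [if_pos ⟨hjne, by omega⟩, mul_assoc]
end

section
/- Let R be an exchange ring and let α = (a_1, a_2, …, a_n) be a right unimodular row over R, with n ≥ 2. Then there exists a matrix E ∈ E_n(R) such that the row (c_1, c_2, …, c_n) = αE satisfies: c_2 is a von Neumann regular element of R, c_2 ∈ Ra_2, and c_2R = (1 − g)R for some idempotent g ∈ R with RgR = R. -/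
universe u

section TV

variable {n : ℕ} {R : Type u} [Ring R]

lemma std_sq_zero (i j : Fin n) (r : R) (hij : i ≠ j) :
    Matrix.single i j r * Matrix.single i j r =
      (0 : Matrix (Fin n) (Fin n) R) :=
  Matrix.single_mul_single_of_ne (c := r) i j i hij.symm r

/-- A transvection `1 + r·e_{ij}` as a unit of the matrix ring. -/
def tvUnit (i j : Fin n) (r : R) (hij : i ≠ j) : (Matrix (Fin n) (Fin n) R)ˣ where
  val := 1 + Matrix.single i j r
  inv := 1 - Matrix.single i j r
  val_inv := by
    rw [add_mul, one_mul, mul_sub, mul_one, std_sq_zero i j r hij, sub_zero]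
    abel
  inv_val := by
    rw [sub_mul, one_mul, mul_add, mul_one, std_sq_zero i j r hij, add_zero]
    abel

lemma tvUnit_mem (i j : Fin n) (r : R) (hij : i ≠ j) :
    tvUnit i j r hij ∈ ElementarySubgroup (Fin n) R :=
  Subgroup.subset_closure ⟨i, j, r, hij, rfl⟩

lemma vecMul_std_apply (g : Fin n → R) (i j k : Fin n) (r : R) :
    Matrix.vecMul g (Matrix.single i j r) k = if k = j then g i * r else 0 := by
  simp only [Matrix.vecMul, dotProduct, Matrix.single, Matrix.of_apply,
    mul_ite, mul_zero, ite_and]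
  rw [Finset.sum_ite_eq Finset.univ i]
  by_cases h : j = k <;> simp [h, eq_comm]

lemma vecMul_tv (g : Fin n → R) (i j : Fin n) (r : R) :
    Matrix.vecMul g (1 + Matrix.single i j r)
      = fun k => g k + if k = j then g i * r else 0 := by
  funext k
  rw [Matrix.vecMul_add, Matrix.vecMul_one]
  show g k + Matrix.vecMul g (Matrix.single i j r) k = _
  rw [vecMul_std_apply]

lemma vecMul_finset_sum (g : Fin n → R) (s : Finset (Fin n))
    (M : Fin n → Matrix (Fin n) (Fin n) R) :
    Matrix.vecMul g (∑ i ∈ s, M i) = ∑ i ∈ s, Matrix.vecMul g (M i) := by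
  classical
  induction s using Finset.induction_on with
  | empty => simp [Matrix.vecMul_zero]
  | @insert a V ha ih =>
    rw [Finset.sum_insert ha, Finset.sum_insert ha, Matrix.vecMul_add, ih]

variable (j₂ : Fin n) (d : Fin n → R)

lemma stdsum_sq_zero (V : Finset (Fin n)) (hV : j₂ ∉ V) :
    (∑ i ∈ V, Matrix.single i j₂ (d i)) * (∑ i ∈ V, Matrix.single i j₂ (d i))
      = 0 := by
  rw [Finset.sum_mul_sum]
  refine Finset.sum_eq_zero fun i _ => Finset.sum_eq_zero fun k hk => ?_
  exact Matrix.single_mul_single_of_ne (c := d i) i j₂ k (fun h => hV (h ▸ hk)) (d k)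

/-- The product of the commuting transvections `1 + d i · e_{i j₂}`, `i ∈ V`. -/
def tvSum (V : Finset (Fin n)) (hV : j₂ ∉ V) : (Matrix (Fin n) (Fin n) R)ˣ where
  val := 1 + ∑ i ∈ V, Matrix.single i j₂ (d i)
  inv := 1 - ∑ i ∈ V, Matrix.single i j₂ (d i)
  val_inv := by
    rw [add_mul, one_mul, mul_sub, mul_one, stdsum_sq_zero j₂ d V hV, sub_zero]
    abel
  inv_val := by
    rw [sub_mul, one_mul, mul_add, mul_one, stdsum_sq_zero j₂ d V hV, add_zero]
    abel

lemma tvSum_mem : ∀ (V : Finset (Fin n)) (hV : j₂ ∉ V),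
    tvSum j₂ d V hV ∈ ElementarySubgroup (Fin n) R := by
  intro V
  induction V using Finset.induction_on with
  | empty =>
    intro hV
    have h1 : tvSum j₂ d ∅ hV = 1 := Units.ext (by simp [tvSum])
    rw [h1]
    exact Subgroup.one_mem _
  | @insert a V ha ih =>
    intro hV
    have haj : a ≠ j₂ := fun h => hV (h ▸ Finset.mem_insert_self a V)
    have hVj : j₂ ∉ V := fun h => hV (Finset.mem_insert_of_mem h)
    have hAS : Matrix.single a j₂ (d a) * (∑ i ∈ V, Matrix.single i j₂ (d i))
        = 0 := by
      rw [Finset.mul_sum]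
      refine Finset.sum_eq_zero fun k hk => ?_
      exact Matrix.single_mul_single_of_ne (c := d a) a j₂ k (fun h => hVj (h ▸ hk)) (d k)
    have hsplit : tvSum j₂ d (insert a V) hV
        = tvUnit a j₂ (d a) haj * tvSum j₂ d V hVj := by
      apply Units.ext
      show (1 : Matrix (Fin n) (Fin n) R) + ∑ i ∈ insert a V, Matrix.single i j₂ (d i)
        = (1 + Matrix.single a j₂ (d a))
          * (1 + ∑ i ∈ V, Matrix.single i j₂ (d i))
      rw [Finset.sum_insert ha, mul_add, mul_one, add_mul, one_mul, hAS, add_zero]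
      abel
    rw [hsplit]
    exact Subgroup.mul_mem _ (tvUnit_mem _ _ _ _) (ih hVj)

lemma vecMul_tvSum (g : Fin n → R) (V : Finset (Fin n)) (hV : j₂ ∉ V) :
    Matrix.vecMul g (tvSum j₂ d V hV).val
      = fun k => g k + if k = j₂ then ∑ i ∈ V, g i * d i else 0 := by
  funext k
  show Matrix.vecMul g (1 + ∑ i ∈ V, Matrix.single i j₂ (d i)) k = _
  rw [Matrix.vecMul_add, Matrix.vecMul_one]
  show g k + Matrix.vecMul g (∑ i ∈ V, Matrix.single i j₂ (d i)) k = _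
  congr 1
  rw [vecMul_finset_sum, Finset.sum_apply]
  rw [Finset.sum_congr rfl fun i _ => vecMul_std_apply g i j₂ k (d i)]
  by_cases h : k = j₂ <;> simp [h]

end TV

section Core

variable {R : Type u} [Ring R]

/-- The element-level core construction. -/
lemma core_construction (hR : IsExchangeRing R) {n : ℕ} (a r : Fin n → R)
    (hr : ∑ i, a i * r i = 1) (j₁ j₂ : Fin n) (hne : j₁ ≠ j₂) :
    ∃ (w : R) (σ : Fin n → R) (qt zt : R),
      IsIdempotentElem qt ∧
      a j₂ * zt = qt ∧
      (1 - qt) = ∑ i ∈ Finset.univ.erase j₂,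
          (a i + if i = j₁ then a j₂ * w else 0) * σ i ∧
      TwoSidedIdeal.span ({1 - qt} : Set R) = ⊤ := by
  classical
  obtain ⟨q, x, Y, hqi, hqe, hqc⟩ := hR (a j₂ * r j₂)
  have hq2 : q * q = q := hqi
  set U := Finset.univ.erase j₂ with hUdef
  have hj₁U : j₁ ∈ U := Finset.mem_erase.mpr ⟨hne, Finset.mem_univ _⟩
  -- key1 : 1 - q = ∑_{i ∈ U} a i * (r i * Y)
  have ht : a j₂ * r j₂ + ∑ i ∈ U, a i * r i = 1 := by
    rw [hUdef, Finset.add_sum_erase Finset.univ (fun i => a i * r i) (Finset.mem_univ j₂)]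
    exact hr
  have ht2 : (1 : R) - a j₂ * r j₂ = ∑ i ∈ U, a i * r i := by
    rw [sub_eq_iff_eq_add, ← ht, add_comm]
  have key1 : (1 : R) - q = ∑ i ∈ U, a i * (r i * Y) := by
    rw [hqc, ht2, Finset.sum_mul]
    exact Finset.sum_congr rfl fun i _ => mul_assoc _ _ _
  have hv : a j₂ * (r j₂ * x) = q := by rw [← mul_assoc, ← hqe]
  set w := (r j₂ * x) * (1 - a j₁) with hwdef
  have hw : a j₂ * w = q * (1 - a j₁) := by rw [hwdef, ← mul_assoc, hv]
  set a' := fun i => a i + if i = j₁ then a j₂ * w else 0 with ha'def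
  set jj := (1 - q) * (1 - a j₁) with hjjdef
  -- keyu
  have keyu : ∑ i ∈ U, a' i * (r i * Y)
      = (1 - q) + (q * (1 - a j₁)) * (r j₁ * Y) := by
    have expand : ∀ i ∈ U, a' i * (r i * Y)
        = a i * (r i * Y) + (if i = j₁ then (a j₂ * w) * (r i * Y) else 0) := by
      intro i _
      by_cases h : i = j₁ <;> simp [ha'def, h, add_mul]
    rw [Finset.sum_congr rfl expand, Finset.sum_add_distrib, ← key1,
      Finset.sum_ite_eq' U j₁ (fun i => (a j₂ * w) * (r i * Y)), if_pos hj₁U, hw]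
  -- key2
  set σ0 := fun i => (if i = j₁ then (1 : R) else 0) + (r i * Y) * jj with hσ0def
  have key2 : ∑ i ∈ U, a' i * σ0 i
      = 1 + (q * (1 - a j₁)) * ((r j₁ * Y) * jj) := by
    have expand : ∀ i ∈ U, a' i * σ0 i
        = (if i = j₁ then a' i else 0) + (a' i * (r i * Y)) * jj := by
      intro i _
      by_cases h : i = j₁ <;> simp [hσ0def, h, mul_add, mul_assoc]
    rw [Finset.sum_congr rfl expand, Finset.sum_add_distrib,
      Finset.sum_ite_eq' U j₁ a', if_pos hj₁U, ← Finset.sum_mul, keyu]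
    have e1 : (1 - q) * jj = jj := by
      rw [hjjdef, ← mul_assoc]
      congr 1
      exact hqi.one_sub
    rw [add_mul, e1]
    have ha'j₁ : a' j₁ = a j₁ + q * (1 - a j₁) := by simp [ha'def, hw]
    rw [ha'j₁, hjjdef]
    noncomm_ring
  -- the element b and the second exchange
  set bb := -((q * (1 - a j₁)) * ((r j₁ * Y) * jj)) with hbbdef
  have hP : ∑ i ∈ U, a' i * σ0 i = 1 - bb := by rw [key2, hbbdef, sub_neg_eq_add]
  obtain ⟨qt, xt, yt, hqti, hqte, hqtc⟩ := hR bb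
  have key3 : (1 : R) - qt = ∑ i ∈ U, a' i * (σ0 i * yt) := by
    rw [hqtc, ← hP, Finset.sum_mul]
    exact Finset.sum_congr rfl fun i _ => mul_assoc _ _ _
  -- q * qt = qt
  have hqq' : ∀ z : R, q * (q * z) = q * z := fun z => by rw [← mul_assoc, hq2]
  have hqbb : q * bb = bb := by
    rw [hbbdef, mul_neg, neg_inj]
    simp only [mul_assoc]
    exact hqq' _
  have hqqt : q * qt = qt := by rw [hqte, ← mul_assoc, hqbb]
  -- fullness
  set G := TwoSidedIdeal.span ({1 - qt} : Set R) with hGdef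
  have honesub : (1 - q) * (1 - qt) = 1 - q := by
    rw [mul_sub, mul_one, sub_mul, one_mul, hqqt, sub_self, sub_zero]
  have hmem0 : (1 - qt) ∈ G := TwoSidedIdeal.subset_span rfl
  have hmem1 : (1 - q) ∈ G := by
    rw [← honesub]
    exact G.mul_mem_left _ _ hmem0
  have hmemb : bb ∈ G := by
    have hb2 : bb = -(((q * (1 - a j₁)) * (r j₁ * Y) * (1 - q)) * (1 - a j₁)) := by
      rw [hbbdef, hjjdef]
      simp only [mul_assoc]
    rw [hb2]
    exact G.neg_mem (G.mul_mem_right _ _ (G.mul_mem_left _ _ hmem1))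
  have hmemqt : qt ∈ G := by
    rw [hqte]
    exact G.mul_mem_right _ _ hmemb
  have h1G : (1 : R) ∈ G := by
    have := G.add_mem hmem0 hmemqt
    rwa [sub_add_cancel] at this
  have hfull : G = ⊤ := (TwoSidedIdeal.one_mem_iff G).mp h1G
  -- zt
  set zt := -((r j₂ * x) * ((1 - a j₁) * ((r j₁ * Y) * (jj * xt)))) with hztdef
  have hzt : a j₂ * zt = qt := by
    rw [hqte, hbbdef, hztdef, ← hv]
    simp only [neg_mul, mul_neg, mul_assoc]
  exact ⟨w, fun i => σ0 i * yt, qt, zt, hqti, hzt, key3, hfull⟩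

end Core

/-- The transformed row is `c = α · E`; the second entry is the one of
index `⟨1, _⟩`.  `c₂R = (1-g)R` is an equality of right ideals
(`Submodule.span Rᵐᵒᵖ`), and `RgR = R` is expressed via `TwoSidedIdeal.span`. -/
theorem stmt5 (R : Type u) [Ring R] (hR : IsExchangeRing R) (n : ℕ) (hn : 2 ≤ n)
    (a : Fin n → R) (ha : ∃ r : Fin n → R, ∑ i, a i * r i = 1) :
    ∃ E ∈ ElementarySubgroup (Fin n) R, ∃ c : Fin n → R,
      c = Matrix.vecMul a E.val ∧
      (∃ y : R, c ⟨1, by omega⟩ * y * c ⟨1, by omega⟩ = c ⟨1, by omega⟩) ∧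
      (∃ s : R, c ⟨1, by omega⟩ = s * a ⟨1, by omega⟩) ∧
      (∃ g : R, IsIdempotentElem g ∧ TwoSidedIdeal.span ({g} : Set R) = ⊤ ∧
        Submodule.span Rᵐᵒᵖ ({c ⟨1, by omega⟩} : Set R)
          = Submodule.span Rᵐᵒᵖ ({1 - g} : Set R)) := by

  classical
  obtain ⟨r, hr⟩ := ha
  have h0n : 0 < n := by omega
  have h1n : 1 < n := by omega
  set j₁ : Fin n := ⟨0, h0n⟩ with hj₁def
  set j₂ : Fin n := ⟨1, h1n⟩ with hj₂def
  have hne : j₁ ≠ j₂ := by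
    rw [hj₁def, hj₂def]
    intro hcon
    have := congrArg Fin.val hcon
    simp at this
  obtain ⟨w, σ, qt, zt, hqti, hzt, hsum, hfull⟩ :=
    core_construction hR a r hr j₁ j₂ hne
  set U := Finset.univ.erase j₂ with hUdef
  have hj₂U : j₂ ∉ U := Finset.notMem_erase j₂ Finset.univ
  set a' := fun i => a i + if i = j₁ then a j₂ * w else 0 with ha'def
  set d := fun i => -(σ i * a j₂) with hddef
  set E₁ := tvUnit j₂ j₁ w hne.symm with hE₁def
  set E₂ := tvSum j₂ d U hj₂U with hE₂def
  have hqt2 : qt * qt = qt := hqti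
  -- compute the second entry of the transformed row
  have hc : Matrix.vecMul a (E₁ * E₂).val j₂ = qt * a j₂ := by
    rw [Units.val_mul, ← Matrix.vecMul_vecMul]
    have hA : Matrix.vecMul a E₁.val = a' := by
      rw [hE₁def]
      show Matrix.vecMul a (1 + Matrix.single j₂ j₁ w) = a'
      rw [vecMul_tv, ha'def]
    rw [hA, hE₂def, vecMul_tvSum j₂ d a' U hj₂U]
    show a' j₂ + (if j₂ = j₂ then ∑ i ∈ U, a' i * d i else 0) = qt * a j₂
    rw [if_pos rfl]
    have ha'j₂ : a' j₂ = a j₂ := by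
      rw [ha'def]
      simp [hne.symm]
    have hsum2 : ∑ i ∈ U, a' i * d i = -((1 - qt) * a j₂) := by
      have expand : ∀ i ∈ U, a' i * d i = -((a' i * σ i) * a j₂) := by
        intro i _
        rw [hddef, mul_neg, mul_assoc]
      have hsum' : (1 : R) - qt = ∑ i ∈ U, a' i * σ i := hsum
      rw [Finset.sum_congr rfl expand, Finset.sum_neg_distrib, ← Finset.sum_mul, ← hsum']
    rw [ha'j₂, hsum2, sub_mul, one_mul]
    abel
  have hc2 : Matrix.vecMul a (E₁ * E₂).val j₂ * zt = qt := by
    rw [hc, mul_assoc, hzt, hqt2]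
  refine ⟨E₁ * E₂, Subgroup.mul_mem _ ?_ ?_,
    Matrix.vecMul a (E₁ * E₂).val, rfl, ⟨zt, ?_⟩, ⟨qt, ?_⟩,
    ⟨1 - qt, hqti.one_sub, ?_, ?_⟩⟩
  · rw [hE₁def]; exact tvUnit_mem _ _ _ _
  · rw [hE₂def]; exact tvSum_mem j₂ d U hj₂U
  · show Matrix.vecMul a (E₁ * E₂).val j₂ * zt * Matrix.vecMul a (E₁ * E₂).val j₂
      = Matrix.vecMul a (E₁ * E₂).val j₂
    rw [hc2, hc, ← mul_assoc, hqt2]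
  · show Matrix.vecMul a (E₁ * E₂).val j₂ = qt * a j₂
    exact hc
  · exact hfull
  · show Submodule.span Rᵐᵒᵖ ({Matrix.vecMul a (E₁ * E₂).val j₂} : Set R)
      = Submodule.span Rᵐᵒᵖ ({1 - (1 - qt)} : Set R)
    rw [sub_sub_cancel]
    apply le_antisymm
    · rw [Submodule.span_le, Set.singleton_subset_iff, SetLike.mem_coe,
        Submodule.mem_span_singleton]
      exact ⟨MulOpposite.op (a j₂), hc.symm⟩
    · rw [Submodule.span_le, Set.singleton_subset_iff, SetLike.mem_coe,
        Submodule.mem_span_singleton]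
      exact ⟨MulOpposite.op zt, hc2⟩
end

section
/- Let F be a field, let R = F[x_1, x_2, x_3, x_4]/(x_1, x_2, x_3, x_4)^2, and let a_1, a_2, a_3, a_4 ∈ R be the images of x_1, x_2, x_3, x_4. Let A be the 2×2 matrix with entries a_1, a_2 (first row) and a_3, a_4 (second row). Then for all E, F' ∈ E_2(R), the four entries of the matrix E·A·F' are F-linearly independent nilpotent elements of R. In particular, no sequence of elementary row and column operations transforms A into a matrix with a zero entry, so A cannot be diagonalized by elementary operations. -/
universe u

set_option synthInstance.maxHeartbeats 400000
set_option maxHeartbeats 1000000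

/-- `R = F[x₁,x₂,x₃,x₄]/(x₁,x₂,x₃,x₄)²`. -/
abbrev ExRing (F : Type u) [Field F] : Type u :=
  MvPolynomial (Fin 4) F ⧸
    (Ideal.span (Set.range (MvPolynomial.X : Fin 4 → MvPolynomial (Fin 4) F)) ^ 2)

/-- `aᵢ`, the image of `xᵢ` in `R`. -/
noncomputable def exGen (F : Type u) [Field F] (i : Fin 4) : ExRing F :=
  Ideal.Quotient.mk _ (MvPolynomial.X i)

/-- The matrix `A = [[a₁, a₂], [a₃, a₄]]`. -/
noncomputable def exMat (F : Type u) [Field F] : Matrix (Fin 2) (Fin 2) (ExRing F) :=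
  !![exGen F 0, exGen F 1; exGen F 2, exGen F 3]

section Aux

variable (F : Type u) [Field F]

noncomputable def mIdeal : Ideal (ExRing F) :=
  Ideal.map (Ideal.Quotient.mk _)
    (Ideal.span (Set.range (MvPolynomial.X : Fin 4 → MvPolynomial (Fin 4) F)))

lemma mul_mem_m_zero {x y : ExRing F} (hx : x ∈ mIdeal F) (hy : y ∈ mIdeal F) :
    x * y = 0 := by
  have h : mIdeal F * mIdeal F = ⊥ := by
    simp only [mIdeal]
    rw [← Ideal.map_mul, ← sq, Ideal.map_quotient_self]
  have := Ideal.mul_mem_mul hx hy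
  rw [h] at this
  simpa using this

lemma exGen_mem (i : Fin 4) : exGen F i ∈ mIdeal F :=
  Ideal.mem_map_of_mem _ (Ideal.subset_span ⟨i, rfl⟩)

lemma exMat_mem (i j : Fin 2) : exMat F i j ∈ mIdeal F := by
  fin_cases i <;> fin_cases j <;>
    simpa [exMat] using exGen_mem F _

lemma algebraMap_eq' (c : F) :
    algebraMap F (ExRing F) c = Ideal.Quotient.mk _ (MvPolynomial.C c) := rfl

lemma exists_decomp (r : ExRing F) :
    ∃ c : F, r - algebraMap F (ExRing F) c ∈ mIdeal F := by
  obtain ⟨p, rfl⟩ := Ideal.Quotient.mk_surjective r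
  refine ⟨MvPolynomial.coeff 0 p, ?_⟩
  have hmem : p - MvPolynomial.C (MvPolynomial.coeff 0 p) ∈
      Ideal.span (Set.range (MvPolynomial.X : Fin 4 → MvPolynomial (Fin 4) F)) := by
    rw [← Set.image_univ, MvPolynomial.mem_ideal_span_X_image]
    intro m hm
    have hm0 : m ≠ 0 := by
      intro h
      subst h
      simp [MvPolynomial.mem_support_iff, MvPolynomial.coeff_sub] at hm
    obtain ⟨i, hi⟩ := Finsupp.ne_iff.mp hm0
    refine ⟨i, trivial, ?_⟩
    simpa using hi
  have := Ideal.mem_map_of_mem (Ideal.Quotient.mk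
    (Ideal.span (Set.range (MvPolynomial.X : Fin 4 → MvPolynomial (Fin 4) F)) ^ 2)) hmem
  rw [map_sub] at this
  rw [algebraMap_eq']
  exact this

lemma smul_eq' (a : F) (x : ExRing F) : a • x = algebraMap F (ExRing F) a * x := by
  obtain ⟨p, rfl⟩ := Ideal.Quotient.mk_surjective x
  have h1 : a • (Ideal.Quotient.mk _ p : ExRing F) = Ideal.Quotient.mk _ (a • p) := rfl
  rw [h1, MvPolynomial.smul_eq_C_mul, map_mul, algebraMap_eq']

lemma linIndep_exGen : LinearIndependent F (exGen F) := by
  rw [Fintype.linearIndependent_iff]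
  intro c hc
  have hsmul : ∀ i, c i • exGen F i =
      Ideal.Quotient.mk _ (MvPolynomial.C (c i) * MvPolynomial.X i) := by
    intro i
    have h1 : c i • exGen F i = Ideal.Quotient.mk _ (c i • MvPolynomial.X i) := rfl
    rw [h1, MvPolynomial.smul_eq_C_mul]
  have hmem : (∑ i, MvPolynomial.C (c i) * MvPolynomial.X i : MvPolynomial (Fin 4) F) ∈
      (Ideal.span (Set.range (MvPolynomial.X : Fin 4 → MvPolynomial (Fin 4) F)) ^ 2) := by
    rw [← Ideal.Quotient.eq_zero_iff_mem, map_sum]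
    rw [← hc]
    exact Finset.sum_congr rfl fun i _ => (hsmul i).symm
  have hspan : (Ideal.span (Set.range (MvPolynomial.X : Fin 4 → MvPolynomial (Fin 4) F)) ^ 2)
      = Ideal.span ((fun s => MvPolynomial.monomial s (1 : F)) ''
          {s | ∃ a b : Fin 4, s = Finsupp.single a 1 + Finsupp.single b 1}) := by
    rw [sq, Ideal.span_mul_span']
    congr 1
    ext p
    constructor
    · rintro ⟨_, ⟨a, rfl⟩, _, ⟨b, rfl⟩, rfl⟩
      exact ⟨Finsupp.single a 1 + Finsupp.single b 1, ⟨a, b, rfl⟩, by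
        simp [MvPolynomial.X, MvPolynomial.monomial_mul]⟩
    · rintro ⟨s, ⟨a, b, rfl⟩, rfl⟩
      exact ⟨MvPolynomial.X a, ⟨a, rfl⟩, MvPolynomial.X b, ⟨b, rfl⟩, by
        simp [MvPolynomial.X, MvPolynomial.monomial_mul]⟩
  rw [hspan, MvPolynomial.mem_ideal_span_monomial_image] at hmem
  intro i
  by_contra hci
  have hco : MvPolynomial.coeff (Finsupp.single i 1)
      (∑ j, MvPolynomial.C (c j) * MvPolynomial.X j : MvPolynomial (Fin 4) F) = c i := by
    rw [MvPolynomial.coeff_sum]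
    rw [Finset.sum_eq_single i]
    · rw [MvPolynomial.coeff_C_mul, MvPolynomial.coeff_X', if_pos rfl, mul_one]
    · intro j _ hj
      rw [MvPolynomial.coeff_C_mul, MvPolynomial.coeff_X',
        if_neg (fun h => hj ((Finsupp.single_left_inj one_ne_zero).mp h)), mul_zero]
    · intro h
      exact absurd (Finset.mem_univ i) h
  have hsup : (Finsupp.single i 1 : Fin 4 →₀ ℕ) ∈
      (∑ j, MvPolynomial.C (c j) * MvPolynomial.X j : MvPolynomial (Fin 4) F).support := by
    rw [MvPolynomial.mem_support_iff, hco]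
    exact hci
  obtain ⟨s, ⟨a, b, rfl⟩, hle⟩ := hmem _ hsup
  have ha := Finsupp.le_def.mp hle a
  have hb := Finsupp.le_def.mp hle b
  simp only [Finsupp.add_apply, Finsupp.single_apply] at ha hb
  by_cases hab : a = b
  · subst hab
    simp at ha
    split_ifs at ha <;> omega
  · simp [hab, Ne.symm hab] at ha hb
    split_ifs at ha hb <;> omega

/-- Matrices all of whose entries lie in `mIdeal` annihilate each other. -/
lemma matmul_zero {A B : Matrix (Fin 2) (Fin 2) (ExRing F)}
    (hA : ∀ i j, A i j ∈ mIdeal F) (hB : ∀ i j, B i j ∈ mIdeal F) : A * B = 0 := by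
  ext i j
  rw [Matrix.mul_apply]
  refine Finset.sum_eq_zero fun k _ => mul_mem_m_zero F (hA i k) (hB k j)

lemma mul_entries_mem_left {A B : Matrix (Fin 2) (Fin 2) (ExRing F)}
    (hA : ∀ i j, A i j ∈ mIdeal F) : ∀ i j, (A * B) i j ∈ mIdeal F := by
  intro i j
  rw [Matrix.mul_apply]
  exact Ideal.sum_mem _ fun k _ => Ideal.mul_mem_right _ _ (hA i k)

lemma mul_entries_mem_right {A B : Matrix (Fin 2) (Fin 2) (ExRing F)}
    (hB : ∀ i j, B i j ∈ mIdeal F) : ∀ i j, (A * B) i j ∈ mIdeal F := by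
  intro i j
  rw [Matrix.mul_apply]
  exact Ideal.sum_mem _ fun k _ => Ideal.mul_mem_left _ _ (hB k j)

/-- The entrywise extension-of-scalars map. -/
noncomputable def sig (M : Matrix (Fin 2) (Fin 2) F) : Matrix (Fin 2) (Fin 2) (ExRing F) :=
  M.map (algebraMap F (ExRing F))

lemma sig_mul (M N : Matrix (Fin 2) (Fin 2) F) : sig F (M * N) = sig F M * sig F N := by
  simp only [sig]
  exact (RingHom.mapMatrix (algebraMap F (ExRing F))).map_mul M N

lemma sig_one : sig F 1 = 1 := by
  simp only [sig]
  exact (RingHom.mapMatrix (algebraMap F (ExRing F))).map_one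

/-- Key structural lemma: every element of `E₂(R)` is an invertible scalar matrix plus a
matrix with entries in the square-zero ideal. -/
lemma elem_decomp (U : (Matrix (Fin 2) (Fin 2) (ExRing F))ˣ)
    (hU : U ∈ ElementarySubgroup (Fin 2) (ExRing F)) :
    ∃ M : Matrix (Fin 2) (Fin 2) F, ∃ N : Matrix (Fin 2) (Fin 2) (ExRing F),
      IsUnit M ∧ U.val = sig F M + N ∧ ∀ i j, N i j ∈ mIdeal F := by
  induction hU using Subgroup.closure_induction with
  | mem x hx =>
      obtain ⟨i, j, r, hij, hx⟩ := hx
      obtain ⟨c, hc⟩ := exists_decomp F r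
      refine ⟨1 + Matrix.single i j c,
        Matrix.single i j (r - algebraMap F (ExRing F) c), ?_, ?_, ?_⟩
      · refine IsUnit.of_mul_eq_one (1 - Matrix.single i j c) ?_
        have h0 : Matrix.single i j c * Matrix.single i j c = 0 :=
          Matrix.single_mul_single_of_ne (c := c) (i := i) (j := j) (k := i) (Ne.symm hij) (d := c)
        have : (1 + Matrix.single i j c) * (1 - Matrix.single i j c)
            = 1 - Matrix.single i j c * Matrix.single i j c := by noncomm_ring
        rw [this, h0, sub_zero]
      · rw [hx]
        have : sig F (1 + Matrix.single i j c)
            = 1 + Matrix.single i j (algebraMap F (ExRing F) c) := by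
          ext a b
          simp [sig, Matrix.map_apply, Matrix.single, Matrix.one_apply, Matrix.add_apply,
            apply_ite (algebraMap F (ExRing F))]
        have h2 : algebraMap F (ExRing F) c + (r - algebraMap F (ExRing F) c) = r := by ring
        rw [this, add_assoc, ← Matrix.single_add, h2]
      · intro a b
        simp only [Matrix.single, Matrix.of_apply]
        split_ifs
        · exact hc
        · exact zero_mem _
  | one => exact ⟨1, 0, isUnit_one, by simp [sig_one], by simp⟩
  | mul x y hx hy ihx ihy =>
      obtain ⟨M1, N1, hM1, hx1, hN1⟩ := ihx
      obtain ⟨M2, N2, hM2, hy1, hN2⟩ := ihy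
      refine ⟨M1 * M2, sig F M1 * N2 + N1 * sig F M2 + N1 * N2, hM1.mul hM2, ?_, ?_⟩
      · show (x * y).val = _
        rw [Units.val_mul, hx1, hy1, sig_mul]
        noncomm_ring
      · intro i j
        simp only [Matrix.add_apply]
        refine add_mem (add_mem ?_ ?_) ?_
        · exact mul_entries_mem_right F hN2 i j
        · exact mul_entries_mem_left F hN1 i j
        · exact mul_entries_mem_left F hN1 i j
  | inv x hx ihx =>
      obtain ⟨M, N, hM, hx1, hN⟩ := ihx
      have hdet : IsUnit M.det := (Matrix.isUnit_iff_isUnit_det M).mp hM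
      have hMMi : M * M⁻¹ = 1 := Matrix.mul_nonsing_inv M hdet
      have hMiM : M⁻¹ * M = 1 := Matrix.nonsing_inv_mul M hdet
      have hMi : IsUnit M⁻¹ := Matrix.isUnit_nonsing_inv_iff.mpr hM
      set V : Matrix (Fin 2) (Fin 2) (ExRing F) :=
        sig F M⁻¹ - sig F M⁻¹ * N * sig F M⁻¹ with hV
      have hNmem : ∀ i j, (sig F M⁻¹ * N * sig F M⁻¹) i j ∈ mIdeal F := by
        intro i j
        exact mul_entries_mem_left F (mul_entries_mem_right F hN) i j
      have hxV : x.val * V = 1 := by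
        rw [hx1, hV]
        have h1 : sig F M * sig F M⁻¹ = 1 := by rw [← sig_mul, hMMi, sig_one]
        have h2 : N * (sig F M⁻¹ * N * sig F M⁻¹) = 0 := by
          refine matmul_zero F hN hNmem
        have e1 : sig F M * (sig F M⁻¹ * N * sig F M⁻¹) = N * sig F M⁻¹ := by
          rw [mul_assoc (sig F M⁻¹) N (sig F M⁻¹), ← mul_assoc, h1, one_mul]
        rw [add_mul, mul_sub, mul_sub, h1, e1, h2, sub_zero, sub_add_cancel]
      have hxinv : (x⁻¹).val = V := by
        calc (x⁻¹).val = (x⁻¹).val * (x.val * V) := by rw [hxV, mul_one]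
          _ = ((x⁻¹).val * x.val) * V := by rw [mul_assoc]
          _ = V := by rw [← Units.val_mul, inv_mul_cancel, Units.val_one, one_mul]
      refine ⟨M⁻¹, -(sig F M⁻¹ * N * sig F M⁻¹), hMi, ?_, ?_⟩
      · rw [hxinv, hV, sub_eq_add_neg]
      · intro i j
        simpa using neg_mem (hNmem i j)

end Aux

open Kronecker in
lemma main_part (F : Type u) [Field F] (E F' : (Matrix (Fin 2) (Fin 2) (ExRing F))ˣ)
    (hE : E ∈ ElementarySubgroup (Fin 2) (ExRing F))
    (hF' : F' ∈ ElementarySubgroup (Fin 2) (ExRing F)) :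
    LinearIndependent F (fun ij : Fin 2 × Fin 2 => (E.val * exMat F * F'.val) ij.1 ij.2) ∧
      (∀ i j, IsNilpotent ((E.val * exMat F * F'.val) i j)) ∧
      (∀ i j, (E.val * exMat F * F'.val) i j ≠ 0) := by
  obtain ⟨M, N, hM, hEeq, hN⟩ := elem_decomp F E hE
  obtain ⟨M', N', hM', hFeq, hN'⟩ := elem_decomp F F' hF'
  have hNA : N * exMat F = 0 := matmul_zero F hN (exMat_mem F)
  have hAN' : exMat F * N' = 0 := matmul_zero F (exMat_mem F) hN'
  have key : E.val * exMat F * F'.val = sig F M * exMat F * sig F M' := by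
    rw [hEeq, hFeq, add_mul, hNA, add_zero, mul_add,
      mul_assoc (sig F M) (exMat F) N', hAN', mul_zero, add_zero]
  set C : Matrix (Fin 2 × Fin 2) (Fin 2 × Fin 2) F := M ⊗ₖ (Matrix.transpose M') with hC
  have hCapp : ∀ p q : Fin 2 × Fin 2, C p q = M p.1 q.1 * M' q.2 p.2 := fun p q => rfl
  have hentry : ∀ p : Fin 2 × Fin 2, (sig F M * exMat F * sig F M') p.1 p.2
      = ∑ q : Fin 2 × Fin 2, C p q • exMat F q.1 q.2 := by
    intro p
    calc (sig F M * exMat F * sig F M') p.1 p.2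
        = ∑ l, (∑ k, sig F M p.1 k * exMat F k l) * sig F M' l p.2 := by
          rw [Matrix.mul_apply]
          exact Finset.sum_congr rfl fun l _ => by rw [Matrix.mul_apply]
      _ = ∑ l, ∑ k, (M p.1 k * M' l p.2) • exMat F k l := by
          refine Finset.sum_congr rfl fun l _ => ?_
          rw [Finset.sum_mul]
          refine Finset.sum_congr rfl fun k _ => ?_
          simp only [sig, Matrix.map_apply]
          rw [smul_eq' F, map_mul]
          ring
      _ = ∑ q : Fin 2 × Fin 2, C p q • exMat F q.1 q.2 := by
          rw [Fintype.sum_prod_type, Finset.sum_comm]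
          exact Finset.sum_congr rfl fun l _ => Finset.sum_congr rfl fun k _ => by
            rw [hCapp]
  -- linear independence of the entries of `exMat` as a family over `Fin 2 × Fin 2`
  have hv : LinearIndependent F (fun q : Fin 2 × Fin 2 => exMat F q.1 q.2) := by
    have hg : Function.Injective (fun q : Fin 2 × Fin 2 => (⟨2 * q.1.val + q.2.val, by omega⟩ : Fin 4)) := by
      decide
    have := (linIndep_exGen F).comp _ hg
    convert this using 1
    funext q
    obtain ⟨i, j⟩ := q
    fin_cases i <;> fin_cases j <;>
      simp [exMat, exGen, Function.comp]
  have hdetC : IsUnit C.det := by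
    rw [hC, Matrix.det_kronecker]
    rw [Matrix.det_transpose]
    exact ((((Matrix.isUnit_iff_isUnit_det M).mp hM).pow _).mul
      (((Matrix.isUnit_iff_isUnit_det M').mp hM').pow _))
  have hCunit : IsUnit C := (Matrix.isUnit_iff_isUnit_det C).mpr hdetC
  have hli : LinearIndependent F
      (fun ij : Fin 2 × Fin 2 => (E.val * exMat F * F'.val) ij.1 ij.2) := by
    simp only [key]
    rw [Fintype.linearIndependent_iff]
    intro g hg
    have hsum : ∑ q : Fin 2 × Fin 2, (∑ p : Fin 2 × Fin 2, g p * C p q) • exMat F q.1 q.2 = 0 := by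
      rw [← hg]
      calc ∑ q : Fin 2 × Fin 2, (∑ p : Fin 2 × Fin 2, g p * C p q) • exMat F q.1 q.2
          = ∑ q : Fin 2 × Fin 2, ∑ p : Fin 2 × Fin 2, (g p * C p q) • exMat F q.1 q.2 := by
            exact Finset.sum_congr rfl fun q _ => Finset.sum_smul
        _ = ∑ p : Fin 2 × Fin 2, ∑ q : Fin 2 × Fin 2, (g p * C p q) • exMat F q.1 q.2 :=
            Finset.sum_comm
        _ = ∑ p : Fin 2 × Fin 2, g p • (sig F M * exMat F * sig F M') p.1 p.2 := by
            refine Finset.sum_congr rfl fun p _ => ?_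
            rw [hentry p, Finset.smul_sum]
            exact Finset.sum_congr rfl fun q _ => mul_smul _ _ _
    have hco := Fintype.linearIndependent_iff.mp hv _ hsum
    have hvm : Matrix.vecMul g C = 0 := by
      funext q
      exact hco q
    have hinj := Matrix.vecMul_injective_iff_isUnit.mpr hCunit
    have : g = 0 := by
      apply hinj
      show Matrix.vecMul g C = Matrix.vecMul 0 C
      rw [hvm, Matrix.zero_vecMul]
    intro p
    rw [this]
    rfl
  refine ⟨hli, ?_, ?_⟩
  · intro i j
    have hmem : (E.val * exMat F * F'.val) i j ∈ mIdeal F := by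
      rw [key]
      exact mul_entries_mem_left F (mul_entries_mem_right F (exMat_mem F)) i j
    exact ⟨2, by rw [sq]; exact mul_mem_m_zero F hmem hmem⟩
  · intro i j
    exact hli.ne_zero (i, j)

theorem stmt13 (F : Type u) [Field F] :
    (∀ E F' : (Matrix (Fin 2) (Fin 2) (ExRing F))ˣ,
      E ∈ ElementarySubgroup (Fin 2) (ExRing F) →
      F' ∈ ElementarySubgroup (Fin 2) (ExRing F) →
      LinearIndependent F (fun ij : Fin 2 × Fin 2 => (E.val * exMat F * F'.val) ij.1 ij.2) ∧
      (∀ i j, IsNilpotent ((E.val * exMat F * F'.val) i j)) ∧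
      (∀ i j, (E.val * exMat F * F'.val) i j ≠ 0)) ∧
    ¬ ∃ E F' : (Matrix (Fin 2) (Fin 2) (ExRing F))ˣ,
        E ∈ ElementarySubgroup (Fin 2) (ExRing F) ∧
        F' ∈ ElementarySubgroup (Fin 2) (ExRing F) ∧
        (E.val * exMat F * F'.val).IsDiag := by
  refine ⟨fun E F' hE hF' => main_part F E F' hE hF', ?_⟩
  rintro ⟨E, F', hE, hF', hdiag⟩
  have h := (main_part F E F' hE hF').2.2 0 1
  exact h (hdiag (by decide : (0 : Fin 2) ≠ 1))
end

section
/- Let F be a field, let R = F[x_1, x_2, x_3, x_4]/(x_1, x_2, x_3, x_4)^2, and let a_1, a_2, a_3, a_4 ∈ R be the images of x_1, x_2, x_3, x_4. Let A be the 2×2 matrix with entries a_1, a_2 (first row) and a_3, a_4 (second row). Then there do not exist invertible matrices X, Y ∈ GL_2(R) such that XAY is a diagonal matrix. -/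
universe u

noncomputable section StmtAux

variable (F : Type u) [Field F]

/-- The residue map `R → F`. -/
noncomputable def exPi : ExRing F →+* F :=
  Ideal.Quotient.lift _ (MvPolynomial.constantCoeff (σ := Fin 4) (R := F)) (by
    intro a ha
    have h1 : (Ideal.span (Set.range (MvPolynomial.X : Fin 4 → MvPolynomial (Fin 4) F))) ^ 2
        ≤ RingHom.ker (MvPolynomial.constantCoeff (σ := Fin 4) (R := F)) := by
      refine le_trans (Ideal.pow_le_self two_ne_zero) ?_
      rw [Ideal.span_le]
      rintro _ ⟨i, rfl⟩
      simp [RingHom.mem_ker]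
    exact h1 ha)

/-- The ring hom `F[x⃗] → F[ε]` sending `xᵢ ↦ ε` and other variables to `0`. -/
noncomputable def exPhi (i : Fin 4) : MvPolynomial (Fin 4) F →+* DualNumber F :=
  (MvPolynomial.aeval fun j => if j = i then (DualNumber.eps : DualNumber F) else 0).toRingHom

/-- The induced ring hom `R → F[ε]`. -/
noncomputable def exPsi (i : Fin 4) : ExRing F →+* DualNumber F :=
  Ideal.Quotient.lift _ (exPhi F i) (by
    intro a ha
    have hmap : Ideal.map (exPhi F i)
        ((Ideal.span (Set.range (MvPolynomial.X : Fin 4 → MvPolynomial (Fin 4) F))) ^ 2) = ⊥ := by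
      rw [Ideal.map_pow]
      have h1 : Ideal.map (exPhi F i)
          (Ideal.span (Set.range (MvPolynomial.X : Fin 4 → MvPolynomial (Fin 4) F)))
          ≤ Ideal.span {(DualNumber.eps : DualNumber F)} := by
        rw [Ideal.map_span, Ideal.span_le]
        rintro _ ⟨_, ⟨j, rfl⟩, rfl⟩
        by_cases h : j = i <;>
          simp [exPhi, h, Ideal.mem_span_singleton]
      refine le_bot_iff.mp (le_trans (Ideal.pow_right_mono h1 2) ?_)
      rw [Ideal.span_singleton_pow]
      simp [pow_two, DualNumber.eps_mul_eps]
    have h2 := Ideal.mem_map_of_mem (exPhi F i) ha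
    rw [hmap] at h2
    simpa using h2)

lemma exPsi_mk (i : Fin 4) (p : MvPolynomial (Fin 4) F) :
    exPsi F i (Ideal.Quotient.mk _ p) = exPhi F i p := rfl

lemma exPhi_fst (i : Fin 4) (p : MvPolynomial (Fin 4) F) :
    (exPhi F i p).fst = MvPolynomial.constantCoeff p := by
  induction p using MvPolynomial.induction_on with
  | C a =>
      simp [exPhi, TrivSqZeroExt.algebraMap_eq_inl, TrivSqZeroExt.fst_inl]
  | add p q hp hq => simp [map_add, hp, hq]
  | mul_X p j hp =>
      by_cases h : j = i <;>
        simp [map_mul, exPhi, hp, h, DualNumber.fst_eps]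

lemma exPsi_fst (i : Fin 4) (r : ExRing F) :
    (exPsi F i r).fst = exPi F r := by
  obtain ⟨p, rfl⟩ := Ideal.Quotient.mk_surjective r
  rw [exPsi_mk, exPhi_fst]
  rfl

lemma exPsi_exGen (i j : Fin 4) :
    exPsi F i (exGen F j) = if j = i then (DualNumber.eps : DualNumber F) else 0 := by
  rw [exGen, exPsi_mk]
  simp [exPhi]

lemma exKey (i j : Fin 4) (x y : ExRing F) :
    (exPsi F i (x * exGen F j * y)).snd = if j = i then exPi F x * exPi F y else 0 := by
  rw [map_mul, map_mul, exPsi_exGen]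
  by_cases h : j = i
  · rw [if_pos h, if_pos h]
    rw [TrivSqZeroExt.snd_mul]
    simp only [TrivSqZeroExt.fst_mul, TrivSqZeroExt.snd_mul, DualNumber.fst_eps,
      DualNumber.snd_eps, mul_zero, zero_smul, smul_zero, add_zero, zero_add,
      MulOpposite.op_zero, smul_eq_mul, MulOpposite.smul_eq_mul_unop, MulOpposite.unop_op, mul_one,
      exPsi_fst]
    ring
  · rw [if_neg h, if_neg h]
    simp

end StmtAux

set_option maxHeartbeats 1600000
set_option synthInstance.maxHeartbeats 400000

theorem stmt14 (F : Type u) [Field F] :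
    ¬ ∃ X Y : (Matrix (Fin 2) (Fin 2) (ExRing F))ˣ,
        (X.val * exMat F * Y.val).IsDiag := by
  rintro ⟨X, Y, hdiag⟩
  have h01 : (X.val * exMat F * Y.val) 0 1 = 0 := hdiag (by decide)
  have h10 : (X.val * exMat F * Y.val) 1 0 = 0 := hdiag (by decide)
  have e01 : (X.val * exMat F * Y.val) 0 1 =
      X.val 0 0 * exGen F 0 * Y.val 0 1 + X.val 0 0 * exGen F 1 * Y.val 1 1 +
      X.val 0 1 * exGen F 2 * Y.val 0 1 + X.val 0 1 * exGen F 3 * Y.val 1 1 := by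
    simp only [Matrix.mul_apply, Fin.sum_univ_two, exMat, Matrix.cons_val', Matrix.cons_val_zero,
      Matrix.cons_val_one, Matrix.head_cons, Matrix.empty_val', Matrix.cons_val_fin_one,
      Matrix.head_fin_const, Matrix.of_apply]
    try ring
  have e10 : (X.val * exMat F * Y.val) 1 0 =
      X.val 1 0 * exGen F 0 * Y.val 0 0 + X.val 1 0 * exGen F 1 * Y.val 1 0 +
      X.val 1 1 * exGen F 2 * Y.val 0 0 + X.val 1 1 * exGen F 3 * Y.val 1 0 := by
    simp only [Matrix.mul_apply, Fin.sum_univ_two, exMat, Matrix.cons_val', Matrix.cons_val_zero,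
      Matrix.cons_val_one, Matrix.head_cons, Matrix.empty_val', Matrix.cons_val_fin_one,
      Matrix.head_fin_const, Matrix.of_apply]
    try ring
  rw [e01] at h01
  rw [e10] at h10
  have H01 : ∀ i : Fin 4, (exPsi F i (X.val 0 0 * exGen F 0 * Y.val 0 1 +
      X.val 0 0 * exGen F 1 * Y.val 1 1 + X.val 0 1 * exGen F 2 * Y.val 0 1 +
      X.val 0 1 * exGen F 3 * Y.val 1 1)).snd = 0 := by
    intro i; rw [h01]; simp
  have H10 : ∀ i : Fin 4, (exPsi F i (X.val 1 0 * exGen F 0 * Y.val 0 0 +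
      X.val 1 0 * exGen F 1 * Y.val 1 0 + X.val 1 1 * exGen F 2 * Y.val 0 0 +
      X.val 1 1 * exGen F 3 * Y.val 1 0)).snd = 0 := by
    intro i; rw [h10]; simp
  have hpf := H01 0
  have hph := H01 1
  have hqf := H01 2
  have hqh := H01 3
  have hre := H10 0
  have hrg := H10 1
  have hse := H10 2
  have hsg := H10 3
  simp only [map_add, TrivSqZeroExt.snd_add, exKey, if_pos rfl, if_neg, Fin.reduceEq,
    ite_true, ite_false, add_zero, zero_add, reduceIte] at hpf hph hqf hqh hre hrg hse hsg
  -- determinant facts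
  have hdX : IsUnit ((X.val.map (exPi F)).det) := by
    have h1 : IsUnit (X.val.map (exPi F)) := by
      simpa [RingHom.mapMatrix_apply] using X.isUnit.map (RingHom.mapMatrix (exPi F))
    exact (Matrix.isUnit_iff_isUnit_det _).mp h1
  have hdY : IsUnit ((Y.val.map (exPi F)).det) := by
    have h1 : IsUnit (Y.val.map (exPi F)) := by
      simpa [RingHom.mapMatrix_apply] using Y.isUnit.map (RingHom.mapMatrix (exPi F))
    exact (Matrix.isUnit_iff_isUnit_det _).mp h1
  rw [Matrix.det_fin_two] at hdX hdY
  simp only [Matrix.map_apply] at hdX hdY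
  refine (mul_ne_zero hdX.ne_zero hdY.ne_zero) ?_
  linear_combination (exPi F (X.val 1 1) * exPi F (Y.val 0 0)) * hph -
    (exPi F (X.val 1 1) * exPi F (Y.val 1 0)) * hpf -
    (exPi F (X.val 0 1) * exPi F (Y.val 1 1)) * hre +
    (exPi F (X.val 1 0) * exPi F (Y.val 1 0)) * hqf
end

section
/- A unital ring R is separative if and only if the following holds: whenever A, B, C are finitely generated projective right R-modules such that A ⊕ C ≅ B ⊕ C and C is isomorphic to a direct summand of A^n and to a direct summand of B^n for some n ≥ 1, then A ≅ B. -/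
universe u

/-- A ring `R` is *separative* if for all finitely generated projective right `R`-modules
(= `Rᵐᵒᵖ`-modules) `A`, `B`: `A ⊕ A ≅ A ⊕ B` and `A ⊕ B ≅ B ⊕ B` imply `A ≅ B`. -/
def IsSeparativeRing (R : Type u) [Ring R] : Prop :=
  ∀ (A B : Type u) [AddCommGroup A] [AddCommGroup B] [Module Rᵐᵒᵖ A] [Module Rᵐᵒᵖ B],
    Module.Finite Rᵐᵒᵖ A → Module.Projective Rᵐᵒᵖ A →
    Module.Finite Rᵐᵒᵖ B → Module.Projective Rᵐᵒᵖ B →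
    Nonempty ((A × A) ≃ₗ[Rᵐᵒᵖ] A × B) → Nonempty ((A × B) ≃ₗ[Rᵐᵒᵖ] B × B) →
    Nonempty (A ≃ₗ[Rᵐᵒᵖ] B)

namespace Stmt17Aux


private theorem nsmul_congr {M : Type*} [AddCommMonoid M] {p q : ℕ} (a : M) (h : p = q) :
    p • a = q • a := by rw [h]

private theorem two_aux {M : Type*} [AddCommMonoid M] (x : M) (p : ℕ) :
    x + x + p • x = (p + 2) • x := by
  rw [show p + 2 = 1 + 1 + p by ring, add_nsmul, add_nsmul, one_nsmul]

private theorem one_aux {M : Type*} [AddCommMonoid M] (x : M) (p : ℕ) :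
    x + p • x = (p + 1) • x := by
  rw [succ_nsmul, add_comm]

theorem monoid_key {M : Type*} [AddCommMonoid M]
    (sep : ∀ x y : M, x + x = x + y → x + y = y + y → x = y)
    {a b c d e : M} {n : ℕ} (hn : 1 ≤ n)
    (h : a + c = b + c) (hd : c + d = n • a) (he : c + e = n • b) : a = b := by
  -- step 1: b + n•a = a + n•a and a + n•b = b + n•b
  have s1 : b + n • a = a + n • a := by
    rw [← hd, ← add_assoc, ← h, add_assoc]
  have s1' : a + n • b = b + n • b := by
    rw [← he, ← add_assoc, h, add_assoc]
  -- step 2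
  have s2 : ∀ j : ℕ, (n + j) • a = n • a + j • b := by
    intro j
    induction j with
    | zero => simp
    | succ j ih =>
      have : (n + (j + 1)) • a = (n + j) • a + a := by
        rw [show n + (j+1) = (n+j) + 1 by ring, succ_nsmul]
      rw [this, ih, add_comm (n • a) (j • b), add_assoc, add_comm (n • a) a, ← s1,
        succ_nsmul]
      abel
  have s2' : ∀ j : ℕ, (n + j) • b = n • b + j • a := by
    intro j
    induction j with
    | zero => simp
    | succ j ih =>
      have : (n + (j + 1)) • b = (n + j) • b + b := by
        rw [show n + (j+1) = (n+j) + 1 by ring, succ_nsmul]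
      rw [this, ih, add_comm (n • b) (j • a), add_assoc, add_comm (n • b) b, ← s1',
        succ_nsmul]
      abel
  -- step 3 : n•a = n•b
  have s3 : n • a = n • b := by
    apply sep
    · rw [← add_nsmul, s2 n]
    · rw [show n • a + n • b = n • b + n • a from add_comm _ _, ← s2' n, add_nsmul]
  -- step 4
  have s4 : ∀ m : ℕ, n ≤ m → m • a = m • b := by
    intro m hm
    obtain ⟨j, rfl⟩ := Nat.exists_eq_add_of_le hm
    rw [s2 j, s3, ← add_nsmul]
  -- step 5 : downward induction
  have key : ∀ j : ℕ, (∀ m : ℕ, j + 1 ≤ m → m • a = m • b) → a = b := by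
    intro j
    induction j with
    | zero => intro H; simpa using H 1 le_rfl
    | succ j ih =>
      intro H
      -- derive r1 : a + (j+1)•b = (j+2)•a
      have hxx : (a + (j+1) • b) + (a + (j+1) • b) = (2*j+4) • a := by
        have h1 : (a + (j+1) • b) + (a + (j+1) • b) = (a + a) + (2*j+2) • b := by
          rw [show (2*j+2) • b = (j+1) • b + (j+1) • b by
            rw [← add_nsmul]; exact nsmul_congr b (by ring)]
          abel
        rw [h1, ← H (2*j+2) (by omega), two_aux]
      have hxy : (a + (j+1) • b) + (j+2) • a = (2*j+4) • a := by
        rw [add_assoc, H (j+2) (by omega), ← add_nsmul,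
          show ((j+1)+(j+2)) • b = (2*j+3) • b from nsmul_congr b (by ring),
          ← H (2*j+3) (by omega), one_aux]
      have hyy : (j+2) • a + (j+2) • a = (2*j+4) • a := by
        rw [← add_nsmul]; exact nsmul_congr a (by ring)
      have r1 : a + (j+1) • b = (j+2) • a :=
        sep _ _ (hxx.trans hxy.symm) (hxy.trans hyy.symm)
      -- symmetric r2 : b + (j+1)•a = (j+2)•b
      have hxx' : (b + (j+1) • a) + (b + (j+1) • a) = (2*j+4) • b := by
        have h1 : (b + (j+1) • a) + (b + (j+1) • a) = (b + b) + (2*j+2) • a := by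
          rw [show (2*j+2) • a = (j+1) • a + (j+1) • a by
            rw [← add_nsmul]; exact nsmul_congr a (by ring)]
          abel
        rw [h1, H (2*j+2) (by omega), two_aux]
      have hxy' : (b + (j+1) • a) + (j+2) • b = (2*j+4) • b := by
        rw [add_assoc, ← H (j+2) (by omega), ← add_nsmul,
          show ((j+1)+(j+2)) • a = (2*j+3) • a from nsmul_congr a (by ring),
          H (2*j+3) (by omega), one_aux]
      have hyy' : (j+2) • b + (j+2) • b = (2*j+4) • b := by
        rw [← add_nsmul]; exact nsmul_congr b (by ring)
      have r2 : b + (j+1) • a = (j+2) • b :=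
        sep _ _ (hxx'.trans hxy'.symm) (hxy'.trans hyy'.symm)
      -- now u = (j+1)•a, v = (j+1)•b
      have huu : (j+1) • a + (j+1) • a = (2*j+2) • a := by
        rw [← add_nsmul]; exact nsmul_congr a (by ring)
      have huv : (j+1) • a + (j+1) • b = (2*j+2) • a := by
        rw [show (j+1) • b = j • b + b from succ_nsmul b j,
          show (j+1) • a + (j • b + b) = j • b + (b + (j+1) • a) by abel, r2,
          ← add_nsmul,
          show (j + (j+2)) • b = (2*j+2) • b from nsmul_congr b (by ring),
          ← H (2*j+2) (by omega)]
      have hvv : (j+1) • b + (j+1) • b = (2*j+2) • a := by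
        rw [← add_nsmul,
          show ((j+1)+(j+1)) • b = (2*j+2) • b from nsmul_congr b (by ring),
          ← H (2*j+2) (by omega)]
      have uv : (j+1) • a = (j+1) • b :=
        sep _ _ (huu.trans huv.symm) (huv.trans hvv.symm)
      apply ih
      intro m hm
      rcases eq_or_lt_of_le hm with hm' | hm'
      · rw [← hm']; exact uv
      · exact H m (by omega)
  obtain ⟨t, rfl⟩ := Nat.exists_eq_add_of_le hn
  exact key t (fun m hm => s4 m (by omega))

section FGPsec


variable (S : Type u) [Ring S]

/-- Bundled finitely generated projective `S`-modules. -/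
structure FGP : Type (u + 1) where
  carrier : Type u
  [acg : AddCommGroup carrier]
  [mod : Module S carrier]
  [fin : Module.Finite S carrier]
  [proj : Module.Projective S carrier]

attribute [instance] FGP.acg FGP.mod FGP.fin FGP.proj

variable {S}

/-- A subsingleton module is projective. -/
theorem proj_of_subsingleton (P : Type u) [AddCommGroup P] [Module S P] [Subsingleton P] :
    Module.Projective S P :=
  Module.Projective.of_split (M := S) 0 0 (by ext x; exact Subsingleton.elim _ _)

instance punit_fin : Module.Finite S PUnit.{u+1} :=
  Module.Finite.of_surjective (0 : S →ₗ[S] PUnit.{u+1}) (fun x => ⟨0, Subsingleton.elim _ _⟩)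

instance punit_proj : Module.Projective S PUnit.{u+1} := proj_of_subsingleton _

/-- `Fin (n+1) → A` is linearly equivalent to `A × (Fin n → A)`. -/
def finSuccEquiv (A : Type u) [AddCommGroup A] [Module S A] (n : ℕ) :
    (Fin (n + 1) → A) ≃ₗ[S] A × (Fin n → A) where
  toFun f := (f 0, fun i => f i.succ)
  invFun p := Fin.cons p.1 p.2
  map_add' _ _ := rfl
  map_smul' _ _ := rfl
  left_inv f := by
    funext i
    induction i using Fin.cases <;> simp
  right_inv p := by
    obtain ⟨a, g⟩ := p
    refine Prod.ext ?_ (funext fun i => ?_) <;> simp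

instance pi_proj (A : Type u) [AddCommGroup A] [Module S A] [Module.Projective S A] (n : ℕ) :
    Module.Projective S (Fin n → A) := by
  induction n with
  | zero => exact proj_of_subsingleton _
  | succ n ih => exact Module.Projective.of_equiv (finSuccEquiv A n).symm

variable (S)

instance fgpSetoid : Setoid (FGP S) where
  r X Y := Nonempty (X.carrier ≃ₗ[S] Y.carrier)
  iseqv := ⟨fun X => ⟨LinearEquiv.refl S _⟩, fun ⟨e⟩ => ⟨e.symm⟩, fun ⟨e⟩ ⟨f⟩ => ⟨e.trans f⟩⟩

/-- The monoid `V(S)` of iso classes of f.g. projective `S`-modules. -/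
def QV : Type (u + 1) := Quotient (fgpSetoid S)

variable {S}

def FGP.add (X Y : FGP S) : FGP S := ⟨X.carrier × Y.carrier⟩

def FGP.mkQ (X : FGP S) : QV S := Quotient.mk _ X

/-- A trivial module, zero of the monoid. -/
def FGP.zero : FGP S := ⟨PUnit.{u+1}⟩

/-- `PUnit × M ≃ₗ M`. -/
def punitProd (M : Type u) [AddCommGroup M] [Module S M] : (PUnit.{u+1} × M) ≃ₗ[S] M where
  toFun p := p.2
  invFun m := (PUnit.unit, m)
  map_add' _ _ := rfl
  map_smul' _ _ := rfl
  left_inv p := by cases p; rfl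
  right_inv m := rfl

instance : Zero (QV S) := ⟨FGP.mkQ FGP.zero⟩

instance : Add (QV S) :=
  ⟨Quotient.map₂ FGP.add (fun _ _ ⟨e⟩ _ _ ⟨f⟩ => ⟨e.prodCongr f⟩)⟩

instance : AddCommMonoid (QV S) where
  add := (· + ·)
  nsmul := nsmulRec
  zero := 0
  add_assoc x y z := by
    induction x using Quotient.ind
    induction y using Quotient.ind
    induction z using Quotient.ind
    exact Quotient.sound ⟨LinearEquiv.prodAssoc S _ _ _⟩
  zero_add x := by
    induction x using Quotient.ind
    exact Quotient.sound ⟨punitProd _⟩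
  add_zero x := by
    induction x using Quotient.ind
    exact Quotient.sound ⟨(LinearEquiv.prodComm S _ _).trans (punitProd _)⟩
  add_comm x y := by
    induction x using Quotient.ind
    induction y using Quotient.ind
    exact Quotient.sound ⟨LinearEquiv.prodComm S _ _⟩

theorem mkQ_add (X Y : FGP S) : (X.add Y).mkQ = X.mkQ + Y.mkQ := rfl

def FGP.pow (X : FGP S) (n : ℕ) : FGP S := ⟨Fin n → X.carrier⟩

theorem mkQ_pow (X : FGP S) (n : ℕ) : (X.pow n).mkQ = n • X.mkQ := by
  induction n with
  | zero =>
    rw [zero_nsmul]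
    haveI : Subsingleton (X.pow 0).carrier := by
      show Subsingleton (Fin 0 → X.carrier); infer_instance
    haveI : Subsingleton (FGP.zero (S := S)).carrier := by
      show Subsingleton PUnit; infer_instance
    exact Quotient.sound ⟨LinearEquiv.ofSubsingleton _ _⟩
  | succ n ih =>
    have h1 : (X.pow (n+1)).mkQ = (X.add (X.pow n)).mkQ :=
      Quotient.sound ⟨finSuccEquiv X.carrier n⟩
    rw [h1, mkQ_add, ih, succ_nsmul, add_comm]

/-- Splitting off a kernel: if `g ∘ f = id` then `E ≃ C × ker g`, and `ker g` is
f.g. projective whenever `E` is. -/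
theorem split_data {C E : Type u} [AddCommGroup C] [Module S C] [AddCommGroup E] [Module S E]
    [Module.Finite S E] [Module.Projective S E]
    (f : C →ₗ[S] E) (g : E →ₗ[S] C) (hgf : g.comp f = LinearMap.id) :
    ∃ (D : FGP S), Nonempty (E ≃ₗ[S] C × D.carrier) := by
  have hgf' : ∀ x, g (f x) = x := fun x => LinearMap.congr_fun hgf x
  set p : E →ₗ[S] E := LinearMap.id - f.comp g with hp
  have hmem : ∀ x : E, p x ∈ LinearMap.ker g := by
    intro x
    simp [hp, LinearMap.mem_ker, map_sub, hgf']
  set t : E →ₗ[S] LinearMap.ker g := p.codRestrict (LinearMap.ker g) hmem with ht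
  have htval : ∀ x : E, (t x : E) = x - f (g x) := fun x => rfl
  have hts : ∀ x : LinearMap.ker g, t (x : E) = x := by
    intro ⟨x, hx⟩
    ext
    simp only [htval]
    rw [LinearMap.mem_ker.mp hx, map_zero, sub_zero]
  haveI : Module.Finite S (LinearMap.ker g) :=
    Module.Finite.of_surjective t (fun x => ⟨x, hts x⟩)
  haveI : Module.Projective S (LinearMap.ker g) :=
    Module.Projective.of_split (LinearMap.ker g).subtype t
      (by ext x; exact congrArg Subtype.val (hts x))
  refine ⟨⟨LinearMap.ker g⟩, ⟨?_⟩⟩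
  refine LinearEquiv.ofLinear (LinearMap.prod g t)
    (f.comp (LinearMap.fst S C _) + (LinearMap.ker g).subtype.comp (LinearMap.snd S C _)) ?_ ?_
  · apply LinearMap.ext
    rintro ⟨c, ⟨x, hx⟩⟩
    have hx' : g x = 0 := LinearMap.mem_ker.mp hx
    refine Prod.ext ?_ (Subtype.ext ?_)
    · simp [map_add, hgf', hx']
    · simp [htval, map_add, hgf', hx']
  · apply LinearMap.ext
    intro x
    simp [htval]


end FGPsec

section Main

variable {S : Type u} [Ring S]

theorem mkQ_eq_iff {X Y : FGP S} :
    X.mkQ = Y.mkQ ↔ Nonempty (X.carrier ≃ₗ[S] Y.carrier) :=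
  ⟨fun h => Quotient.exact h, fun h => Quotient.sound h⟩

end Main

end Stmt17Aux

open Stmt17Aux in
/-- "`C` is isomorphic to a direct summand of `Aⁿ` (resp. `Bⁿ`)" is
expressed by a split `Rᵐᵒᵖ`-linear injection `C → Aⁿ` (resp. `C → Bⁿ`). -/
theorem stmt17 (R : Type u) [Ring R] :
    IsSeparativeRing R ↔
      ∀ (A B C : Type u) [AddCommGroup A] [AddCommGroup B] [AddCommGroup C]
        [Module Rᵐᵒᵖ A] [Module Rᵐᵒᵖ B] [Module Rᵐᵒᵖ C],
        Module.Finite Rᵐᵒᵖ A → Module.Projective Rᵐᵒᵖ A →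
        Module.Finite Rᵐᵒᵖ B → Module.Projective Rᵐᵒᵖ B →
        Module.Finite Rᵐᵒᵖ C → Module.Projective Rᵐᵒᵖ C →
        Nonempty ((A × C) ≃ₗ[Rᵐᵒᵖ] B × C) →
        (∃ n : ℕ, 1 ≤ n ∧
          (∃ (f : C →ₗ[Rᵐᵒᵖ] (Fin n → A)) (g : (Fin n → A) →ₗ[Rᵐᵒᵖ] C),
            g.comp f = LinearMap.id) ∧
          (∃ (f : C →ₗ[Rᵐᵒᵖ] (Fin n → B)) (g : (Fin n → B) →ₗ[Rᵐᵒᵖ] C),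
            g.comp f = LinearMap.id)) →
        Nonempty (A ≃ₗ[Rᵐᵒᵖ] B) := by
  constructor
  · -- forward direction
    intro hsep A B C _ _ _ _ _ _ finA projA finB projB finC projC hAC hsplit
    obtain ⟨n, hn, ⟨f1, g1, hfg1⟩, ⟨f2, g2, hfg2⟩⟩ := hsplit
    haveI := finA; haveI := projA; haveI := finB; haveI := projB
    haveI := finC; haveI := projC
    set X : FGP Rᵐᵒᵖ := ⟨A⟩ with hX
    set Y : FGP Rᵐᵒᵖ := ⟨B⟩ with hY
    set Z : FGP Rᵐᵒᵖ := ⟨C⟩ with hZ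
    -- the quotient monoid is separative
    have sepQ : ∀ x y : QV Rᵐᵒᵖ, x + x = x + y → x + y = y + y → x = y := by
      intro x y
      induction x using Quotient.ind with | _ U =>
      induction y using Quotient.ind with | _ V =>
      intro h1 h2
      have e1' : (U.add U).mkQ = (U.add V).mkQ := by rw [mkQ_add, mkQ_add]; exact h1
      have e2' : (U.add V).mkQ = (V.add V).mkQ := by rw [mkQ_add, mkQ_add]; exact h2
      have e1 : Nonempty ((U.carrier × U.carrier) ≃ₗ[Rᵐᵒᵖ] U.carrier × V.carrier) :=
        mkQ_eq_iff.mp e1'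
      have e2 : Nonempty ((U.carrier × V.carrier) ≃ₗ[Rᵐᵒᵖ] V.carrier × V.carrier) :=
        mkQ_eq_iff.mp e2'
      exact Quotient.sound (hsep U.carrier V.carrier U.fin U.proj V.fin V.proj e1 e2)
    -- translate the hypotheses into the monoid
    obtain ⟨hAC'⟩ := hAC
    have h : X.mkQ + Z.mkQ = Y.mkQ + Z.mkQ := by
      rw [← mkQ_add, ← mkQ_add]
      exact mkQ_eq_iff.mpr ⟨hAC'⟩
    obtain ⟨D, ⟨eD⟩⟩ := split_data f1 g1 hfg1
    obtain ⟨E', ⟨eE⟩⟩ := split_data f2 g2 hfg2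
    have hd : Z.mkQ + D.mkQ = n • X.mkQ := by
      rw [← mkQ_add, ← mkQ_pow]
      exact mkQ_eq_iff.mpr ⟨eD.symm⟩
    have he : Z.mkQ + E'.mkQ = n • Y.mkQ := by
      rw [← mkQ_add, ← mkQ_pow]
      exact mkQ_eq_iff.mpr ⟨eE.symm⟩
    exact mkQ_eq_iff.mp (monoid_key sepQ hn h hd he)
  · -- converse direction
    intro hyp A B _ _ _ _ finA projA finB projB h1 h2
    haveI := finA; haveI := projA; haveI := finB; haveI := projB
    obtain ⟨e1⟩ := h1
    obtain ⟨e2⟩ := h2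
    refine hyp A B A finA projA finB projB finA projA
      ⟨e1.trans (LinearEquiv.prodComm Rᵐᵒᵖ A B)⟩ ⟨2, one_le_two, ?_, ?_⟩
    · exact ⟨LinearMap.pi (fun _ => LinearMap.id), LinearMap.proj 0,
        LinearMap.ext fun x => rfl⟩
    · refine ⟨((LinearEquiv.finTwoArrow Rᵐᵒᵖ B).symm.toLinearMap.comp
          e2.toLinearMap).comp (LinearMap.inl Rᵐᵒᵖ A B),
        (LinearMap.fst Rᵐᵒᵖ A B).comp (e2.symm.toLinearMap.comp
          (LinearEquiv.finTwoArrow Rᵐᵒᵖ B).toLinearMap), ?_⟩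
      apply LinearMap.ext
      intro a
      simp
end
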